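/- arXiv:1301.4786 — 8 statements merged into one kernel-verified Lean document; each statement's English description precedes it below -/
import Mathlib

section
/- In the offline two-base-station energy cooperation problem over slots t ∈ {1,…,N} with initial storage state (0,0), the infimum of the total conventional (grid) energy Σ_{t=1}^{N}(w₁(t)+w₂(t)) over all feasible policies is attained; moreover, it is attained by a feasible policy that additionally satisfies the complementarity conditions c₁(t)·d₁(t) = 0, c₂(t)·d₂(t) = 0, and x₁₂(t)·x₂₁(t) = 0 for every t ∈ {1,…,N}, so that omitting these bilinear constraints from the linear program in Theorem 1 incurs no loss of optimality. -/
/-- A feasible policy for the two-base-station energy cooperation problem over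
slots `t ∈ {k, …, N}` from initial storage state `(σ₁, σ₂)`. -/
def Feasible (α β Smax : ℝ) (k N : ℕ) (E₁ E₂ : ℕ → ℝ) (σ₁ σ₂ : ℝ)
    (w₁ w₂ c₁ c₂ d₁ d₂ x₁₂ x₂₁ s₁ s₂ : ℕ → ℝ) : Prop :=
  s₁ k = σ₁ ∧ s₂ k = σ₂ ∧
  (∀ t ∈ Finset.Icc k N,
    0 ≤ w₁ t ∧ 0 ≤ w₂ t ∧ 0 ≤ c₁ t ∧ 0 ≤ c₂ t ∧ 0 ≤ d₁ t ∧ 0 ≤ d₂ t ∧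
      0 ≤ x₁₂ t ∧ 0 ≤ x₂₁ t ∧
      s₁ (t + 1) = s₁ t + α * c₁ t - d₁ t ∧
      s₂ (t + 1) = s₂ t + α * c₂ t - d₂ t ∧
      d₁ t ≤ s₁ t ∧ d₂ t ≤ s₂ t ∧
      0 ≤ E₁ t + w₁ t - c₁ t + α * d₁ t - x₁₂ t + β * x₂₁ t ∧
      0 ≤ E₂ t + w₂ t - c₂ t + α * d₂ t - x₂₁ t + β * x₁₂ t) ∧
  (∀ t ∈ Finset.Icc k (N + 1),
    0 ≤ s₁ t ∧ s₁ t ≤ Smax ∧ 0 ≤ s₂ t ∧ s₂ t ≤ Smax)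

/-- Optimal cost `J*_k(σ₁, σ₂)`: the infimum of total grid draw over feasible policies. -/
noncomputable def Jstar (α β Smax : ℝ) (k N : ℕ) (E₁ E₂ : ℕ → ℝ) (σ₁ σ₂ : ℝ) : ℝ :=
  sInf {r : ℝ | ∃ w₁ w₂ c₁ c₂ d₁ d₂ x₁₂ x₂₁ s₁ s₂ : ℕ → ℝ,
    Feasible α β Smax k N E₁ E₂ σ₁ σ₂ w₁ w₂ c₁ c₂ d₁ d₂ x₁₂ x₂₁ s₁ s₂ ∧
    (∑ t ∈ Finset.Icc k N, (w₁ t + w₂ t)) = r}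

namespace OfflineLPAux

/-- Cost of the trivial policy. -/
noncomputable def C0 (N : ℕ) (E₁ E₂ : ℕ → ℝ) : ℝ :=
  ∑ t ∈ Finset.Icc 1 N, (max 0 (-E₁ t) + max 0 (-E₂ t))

/-- A uniform bound on exchanged energies in reduced optimal policies. -/
noncomputable def M0 (Smax : ℝ) (N : ℕ) (E₁ E₂ : ℕ → ℝ) : ℝ :=
  (∑ t ∈ Finset.Icc 1 N, (|E₁ t| + |E₂ t|)) + C0 N E₁ E₂ + Smax

/-- A uniform bound on all variables in reduced optimal policies. -/
noncomputable def BB (Smax : ℝ) (N : ℕ) (E₁ E₂ : ℕ → ℝ) : ℝ := 2 * M0 Smax N E₁ E₂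

/-- Pack ten time profiles into one point of the product space. -/
def pack (f0 f1 f2 f3 f4 f5 f6 f7 f8 f9 : ℕ → ℝ) : Fin 10 → ℕ → ℝ :=
  ![f0, f1, f2, f3, f4, f5, f6, f7, f8, f9]

/-- A point of the product space is nice if it encodes a feasible policy with the
complementarity conditions. -/
def IsNice (α β Smax : ℝ) (N : ℕ) (E₁ E₂ : ℕ → ℝ) (u : Fin 10 → ℕ → ℝ) : Prop :=
  Feasible α β Smax 1 N E₁ E₂ 0 0 (u 0) (u 1) (u 2) (u 3) (u 4) (u 5) (u 6) (u 7) (u 8) (u 9) ∧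
  ∀ t ∈ Finset.Icc 1 N, u 2 t * u 4 t = 0 ∧ u 3 t * u 5 t = 0 ∧ u 6 t * u 7 t = 0

/-- The compact search set: nice policies, all of whose variables lie in `[0, BB]`. -/
def KK (α β Smax : ℝ) (N : ℕ) (E₁ E₂ : ℕ → ℝ) : Set (Fin 10 → ℕ → ℝ) :=
  (Set.univ.pi fun _ : Fin 10 => Set.univ.pi fun _ : ℕ => Set.Icc 0 (BB Smax N E₁ E₂)) ∩
  {u | IsNice α β Smax N E₁ E₂ u}

lemma C0_nonneg (N : ℕ) (E₁ E₂ : ℕ → ℝ) : 0 ≤ C0 N E₁ E₂ :=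
  Finset.sum_nonneg fun t _ => add_nonneg (le_max_left _ _) (le_max_left _ _)

lemma Esum_nonneg (N : ℕ) (E₁ E₂ : ℕ → ℝ) :
    0 ≤ ∑ t ∈ Finset.Icc 1 N, (|E₁ t| + |E₂ t|) :=
  Finset.sum_nonneg fun t _ => add_nonneg (abs_nonneg _) (abs_nonneg _)

lemma M0_nonneg (Smax : ℝ) (hS : 0 ≤ Smax) (N : ℕ) (E₁ E₂ : ℕ → ℝ) :
    0 ≤ M0 Smax N E₁ E₂ := by
  have := C0_nonneg N E₁ E₂; have := Esum_nonneg N E₁ E₂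
  unfold M0; linarith

lemma E_le_Esum {N t : ℕ} (ht : t ∈ Finset.Icc 1 N) (E₁ E₂ : ℕ → ℝ) :
    E₁ t ≤ ∑ r ∈ Finset.Icc 1 N, (|E₁ r| + |E₂ r|) := by
  calc E₁ t ≤ |E₁ t| + |E₂ t| := by
        have := le_abs_self (E₁ t); have := abs_nonneg (E₂ t); linarith
    _ ≤ _ := Finset.single_le_sum (f := fun r => |E₁ r| + |E₂ r|)
        (fun r _ => add_nonneg (abs_nonneg _) (abs_nonneg _)) ht

lemma E_le_Esum' {N t : ℕ} (ht : t ∈ Finset.Icc 1 N) (E₁ E₂ : ℕ → ℝ) :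
    E₂ t ≤ ∑ r ∈ Finset.Icc 1 N, (|E₁ r| + |E₂ r|) := by
  calc E₂ t ≤ |E₁ t| + |E₂ t| := by
        have := le_abs_self (E₂ t); have := abs_nonneg (E₁ t); linarith
    _ ≤ _ := Finset.single_le_sum (f := fun r => |E₁ r| + |E₂ r|)
        (fun r _ => add_nonneg (abs_nonneg _) (abs_nonneg _)) ht

lemma isClosed_nice (α β Smax : ℝ) (N : ℕ) (E₁ E₂ : ℕ → ℝ) :
    IsClosed {u : Fin 10 → ℕ → ℝ | IsNice α β Smax N E₁ E₂ u} := by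
  have h : {u : Fin 10 → ℕ → ℝ | IsNice α β Smax N E₁ E₂ u} =
      (({u : Fin 10 → ℕ → ℝ | u 8 1 = 0} ∩ {u | u 9 1 = 0}) ∩
        (⋂ t ∈ Finset.Icc 1 N,
          ({u : Fin 10 → ℕ → ℝ | 0 ≤ u 0 t} ∩ {u | 0 ≤ u 1 t} ∩ {u | 0 ≤ u 2 t} ∩
            {u | 0 ≤ u 3 t} ∩ {u | 0 ≤ u 4 t} ∩ {u | 0 ≤ u 5 t} ∩ {u | 0 ≤ u 6 t} ∩
            {u | 0 ≤ u 7 t} ∩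
            {u | u 8 (t + 1) = u 8 t + α * u 2 t - u 4 t} ∩
            {u | u 9 (t + 1) = u 9 t + α * u 3 t - u 5 t} ∩
            {u | u 4 t ≤ u 8 t} ∩ {u | u 5 t ≤ u 9 t} ∩
            {u | 0 ≤ E₁ t + u 0 t - u 2 t + α * u 4 t - u 6 t + β * u 7 t} ∩
            {u | 0 ≤ E₂ t + u 1 t - u 3 t + α * u 5 t - u 7 t + β * u 6 t} ∩
            {u | u 2 t * u 4 t = 0} ∩ {u | u 3 t * u 5 t = 0} ∩ {u | u 6 t * u 7 t = 0}))) ∩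
      (⋂ t ∈ Finset.Icc 1 (N + 1),
        ({u : Fin 10 → ℕ → ℝ | 0 ≤ u 8 t} ∩ {u | u 8 t ≤ Smax} ∩ {u | 0 ≤ u 9 t} ∩
          {u | u 9 t ≤ Smax})) := by
    ext u
    simp only [IsNice, Feasible, Set.mem_setOf_eq, Set.mem_inter_iff, Set.mem_iInter]
    constructor
    · rintro ⟨⟨h1, h2, h3, h4⟩, h5⟩
      refine ⟨⟨⟨h1, h2⟩, fun t ht => ?_⟩, fun t ht => ?_⟩
      · have := h3 t ht; have := h5 t ht; tauto
      · have := h4 t ht; tauto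
    · rintro ⟨⟨⟨h1, h2⟩, h3⟩, h4⟩
      refine ⟨⟨h1, h2, fun t ht => ?_, fun t ht => ?_⟩, fun t ht => ?_⟩
      · have := h3 t ht; tauto
      · have := h4 t ht; tauto
      · have := h3 t ht; tauto
  rw [h]
  refine IsClosed.inter (IsClosed.inter (IsClosed.inter ?_ ?_) ?_) ?_
  · exact isClosed_eq (by fun_prop) (by fun_prop)
  · exact isClosed_eq (by fun_prop) (by fun_prop)
  · refine isClosed_iInter fun t => isClosed_iInter fun _ => ?_
    repeat' apply IsClosed.inter
    all_goals first
      | exact isClosed_eq (by fun_prop) (by fun_prop)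
      | exact isClosed_le (by fun_prop) (by fun_prop)
  · refine isClosed_iInter fun t => isClosed_iInter fun _ => ?_
    repeat' apply IsClosed.inter
    all_goals first
      | exact isClosed_eq (by fun_prop) (by fun_prop)
      | exact isClosed_le (by fun_prop) (by fun_prop)

lemma isCompact_KK (α β Smax : ℝ) (N : ℕ) (E₁ E₂ : ℕ → ℝ) :
    IsCompact (KK α β Smax N E₁ E₂) :=
  IsCompact.inter_right
    (isCompact_univ_pi fun _ => isCompact_univ_pi fun _ => isCompact_Icc)
    (isClosed_nice α β Smax N E₁ E₂)


open Finset

lemma pack_mem_box {B : ℝ} (f0 f1 f2 f3 f4 f5 f6 f7 f8 f9 : ℕ → ℝ)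
    (h0 : ∀ n, f0 n ∈ Set.Icc 0 B) (h1 : ∀ n, f1 n ∈ Set.Icc 0 B)
    (h2 : ∀ n, f2 n ∈ Set.Icc 0 B) (h3 : ∀ n, f3 n ∈ Set.Icc 0 B)
    (h4 : ∀ n, f4 n ∈ Set.Icc 0 B) (h5 : ∀ n, f5 n ∈ Set.Icc 0 B)
    (h6 : ∀ n, f6 n ∈ Set.Icc 0 B) (h7 : ∀ n, f7 n ∈ Set.Icc 0 B)
    (h8 : ∀ n, f8 n ∈ Set.Icc 0 B) (h9 : ∀ n, f9 n ∈ Set.Icc 0 B) :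
    pack f0 f1 f2 f3 f4 f5 f6 f7 f8 f9 ∈
      Set.univ.pi fun _ : Fin 10 => Set.univ.pi fun _ : ℕ => Set.Icc (0:ℝ) B := by
  rw [Set.mem_pi]
  intro i _
  rw [Set.mem_pi]
  intro n _
  fin_cases i
  · exact h0 n
  · exact h1 n
  · exact h2 n
  · exact h3 n
  · exact h4 n
  · exact h5 n
  · exact h6 n
  · exact h7 n
  · exact h8 n
  · exact h9 n

set_option maxHeartbeats 1000000 in
lemma exists_nice (α β Smax : ℝ) (hα : 0 ≤ α ∧ α ≤ 1) (hβ : 0 ≤ β ∧ β ≤ 1) (hS : 0 < Smax)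
    (N : ℕ) (E₁ E₂ : ℕ → ℝ) (w₁ w₂ c₁ c₂ d₁ d₂ x₁₂ x₂₁ s₁ s₂ : ℕ → ℝ)
    (hfe : Feasible α β Smax 1 N E₁ E₂ 0 0 w₁ w₂ c₁ c₂ d₁ d₂ x₁₂ x₂₁ s₁ s₂)
    (hcost : (∑ t ∈ Finset.Icc 1 N, (w₁ t + w₂ t)) ≤ C0 N E₁ E₂) :
    ∃ W₁ W₂ C₁ C₂ D₁ D₂ X₁₂ X₂₁ S₁ S₂ : ℕ → ℝ,
      pack W₁ W₂ C₁ C₂ D₁ D₂ X₁₂ X₂₁ S₁ S₂ ∈ KK α β Smax N E₁ E₂ ∧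
      (∑ t ∈ Finset.Icc 1 N, (W₁ t + W₂ t)) = ∑ t ∈ Finset.Icc 1 N, (w₁ t + w₂ t) := by
  obtain ⟨hs1, hs2, hctl, hsto⟩ := hfe
  have h1aa : 0 ≤ 1 - α * α := by nlinarith only [hα.1, hα.2]
  -- reduction amounts for charging/discharging and exchange
  set δ₁ : ℕ → ℝ := fun t => min (c₁ t) (if α = 0 then c₁ t else d₁ t / α) with hδ₁
  set δ₂ : ℕ → ℝ := fun t => min (c₂ t) (if α = 0 then c₂ t else d₂ t / α) with hδ₂
  set m : ℕ → ℝ := fun t => min (x₁₂ t) (x₂₁ t) with hm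
  set W₁ : ℕ → ℝ := fun t => if t ∈ Finset.Icc 1 N then w₁ t else 0 with hW₁
  set W₂ : ℕ → ℝ := fun t => if t ∈ Finset.Icc 1 N then w₂ t else 0 with hW₂
  set C₁ : ℕ → ℝ := fun t => if t ∈ Finset.Icc 1 N then c₁ t - δ₁ t else 0 with hC₁
  set C₂ : ℕ → ℝ := fun t => if t ∈ Finset.Icc 1 N then c₂ t - δ₂ t else 0 with hC₂
  set D₁ : ℕ → ℝ := fun t => if t ∈ Finset.Icc 1 N then d₁ t - α * δ₁ t else 0 with hD₁
  set D₂ : ℕ → ℝ := fun t => if t ∈ Finset.Icc 1 N then d₂ t - α * δ₂ t else 0 with hD₂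
  set X₁₂ : ℕ → ℝ := fun t => if t ∈ Finset.Icc 1 N then x₁₂ t - m t else 0 with hX₁₂
  set X₂₁ : ℕ → ℝ := fun t => if t ∈ Finset.Icc 1 N then x₂₁ t - m t else 0 with hX₂₁
  set S₁ : ℕ → ℝ := fun t => if t ∈ Finset.Icc 1 (N + 1) then s₁ t else 0 with hS₁
  set S₂ : ℕ → ℝ := fun t => if t ∈ Finset.Icc 1 (N + 1) then s₂ t else 0 with hS₂
  have h1mem : (1 : ℕ) ∈ Finset.Icc 1 (N + 1) := by simp [Finset.mem_Icc]
  have hmemS : ∀ t ∈ Finset.Icc 1 N, t ∈ Finset.Icc 1 (N + 1) := by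
    intro t ht; rw [Finset.mem_Icc] at *; omega
  have hmemS' : ∀ t ∈ Finset.Icc 1 N, t + 1 ∈ Finset.Icc 1 (N + 1) := by
    intro t ht; rw [Finset.mem_Icc] at *; omega
  -- pointwise facts about the reductions, for t in the window
  have hδfacts : ∀ t ∈ Finset.Icc 1 N,
      0 ≤ δ₁ t ∧ δ₁ t ≤ c₁ t ∧ α * δ₁ t ≤ d₁ t ∧
      0 ≤ δ₂ t ∧ δ₂ t ≤ c₂ t ∧ α * δ₂ t ≤ d₂ t ∧
      (c₁ t - δ₁ t = 0 ∨ d₁ t - α * δ₁ t = 0) ∧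
      (c₂ t - δ₂ t = 0 ∨ d₂ t - α * δ₂ t = 0) := by
    intro t ht
    obtain ⟨hw1, hw2, hc1, hc2, hd1, hd2, hx1, hx2, _⟩ := hctl t ht
    have key : ∀ c d : ℝ, 0 ≤ c → 0 ≤ d →
        0 ≤ min c (if α = 0 then c else d / α) ∧
        min c (if α = 0 then c else d / α) ≤ c ∧
        α * min c (if α = 0 then c else d / α) ≤ d ∧
        (c - min c (if α = 0 then c else d / α) = 0 ∨
          d - α * min c (if α = 0 then c else d / α) = 0) := by
      intro c d hc hd
      by_cases h0 : α = 0
      · rw [if_pos h0, h0]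
        refine ⟨le_min hc (by simp [hc]), min_le_left _ _, by simpa using hd, ?_⟩
        left; simp
      · have hαpos : 0 < α := lt_of_le_of_ne hα.1 (Ne.symm h0)
        rw [if_neg h0]
        refine ⟨le_min hc (div_nonneg hd hαpos.le), min_le_left _ _, ?_, ?_⟩
        · have hle : min c (d / α) ≤ d / α := min_le_right _ _
          calc α * min c (d / α) ≤ α * (d / α) :=
                mul_le_mul_of_nonneg_left hle hαpos.le
            _ = d := by field_simp
        · rcases min_cases c (d / α) with ⟨he, _⟩ | ⟨he, _⟩
          · left; rw [he]; ring
          · right; rw [he]; field_simp; ring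
    exact ⟨(key _ _ hc1 hd1).1, (key _ _ hc1 hd1).2.1, (key _ _ hc1 hd1).2.2.1,
      (key _ _ hc2 hd2).1, (key _ _ hc2 hd2).2.1, (key _ _ hc2 hd2).2.2.1,
      (key _ _ hc1 hd1).2.2.2, (key _ _ hc2 hd2).2.2.2⟩
  have hmfacts : ∀ t ∈ Finset.Icc 1 N,
      0 ≤ m t ∧ m t ≤ x₁₂ t ∧ m t ≤ x₂₁ t ∧ (x₁₂ t - m t = 0 ∨ x₂₁ t - m t = 0) := by
    intro t ht
    obtain ⟨_, _, _, _, _, _, hx1, hx2, _⟩ := hctl t ht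
    refine ⟨le_min hx1 hx2, min_le_left _ _, min_le_right _ _, ?_⟩
    rcases min_cases (x₁₂ t) (x₂₁ t) with ⟨he, _⟩ | ⟨he, _⟩
    · left; rw [hm]; simp only [he]; ring
    · right; rw [hm]; simp only [he]; ring
  -- the transformed policy is feasible
  have hF : Feasible α β Smax 1 N E₁ E₂ 0 0 W₁ W₂ C₁ C₂ D₁ D₂ X₁₂ X₂₁ S₁ S₂ := by
    refine ⟨by rw [hS₁]; simp only [if_pos h1mem]; exact hs1,
            by rw [hS₂]; simp only [if_pos h1mem]; exact hs2, ?_, ?_⟩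
    · intro t ht
      obtain ⟨hw1, hw2, hc1, hc2, hd1, hd2, hx1, hx2, hr1, hr2, hds1, hds2, hg1, hg2⟩ :=
        hctl t ht
      obtain ⟨ha1, ha2, ha3, hb1, hb2, hb3, _, _⟩ := hδfacts t ht
      obtain ⟨hm0, hm1, hm2, _⟩ := hmfacts t ht
      have e1 : W₁ t = w₁ t := by rw [hW₁]; simp only [if_pos ht]
      have e2 : W₂ t = w₂ t := by rw [hW₂]; simp only [if_pos ht]
      have e3 : C₁ t = c₁ t - δ₁ t := by rw [hC₁]; simp only [if_pos ht]
      have e4 : C₂ t = c₂ t - δ₂ t := by rw [hC₂]; simp only [if_pos ht]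
      have e5 : D₁ t = d₁ t - α * δ₁ t := by rw [hD₁]; simp only [if_pos ht]
      have e6 : D₂ t = d₂ t - α * δ₂ t := by rw [hD₂]; simp only [if_pos ht]
      have e7 : X₁₂ t = x₁₂ t - m t := by rw [hX₁₂]; simp only [if_pos ht]
      have e8 : X₂₁ t = x₂₁ t - m t := by rw [hX₂₁]; simp only [if_pos ht]
      have e9 : S₁ t = s₁ t := by rw [hS₁]; simp only [if_pos (hmemS t ht)]
      have e10 : S₂ t = s₂ t := by rw [hS₂]; simp only [if_pos (hmemS t ht)]
      have e11 : S₁ (t + 1) = s₁ (t + 1) := by rw [hS₁]; simp only [if_pos (hmemS' t ht)]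
      have e12 : S₂ (t + 1) = s₂ (t + 1) := by rw [hS₂]; simp only [if_pos (hmemS' t ht)]
      have h1α : 0 ≤ δ₁ t * (1 - α * α) := mul_nonneg ha1 h1aa
      have h2α : 0 ≤ δ₂ t * (1 - α * α) := mul_nonneg hb1 h1aa
      have h1β : 0 ≤ m t * (1 - β) := mul_nonneg hm0 (by linarith only [hβ.2])
      have hp1 : 0 ≤ α * δ₁ t := mul_nonneg hα.1 ha1
      have hp2 : 0 ≤ α * δ₂ t := mul_nonneg hα.1 hb1
      refine ⟨by rw [e1]; exact hw1, by rw [e2]; exact hw2,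
        by rw [e3]; linarith only [ha2], by rw [e4]; linarith only [hb2],
        by rw [e5]; linarith only [ha3], by rw [e6]; linarith only [hb3],
        by rw [e7]; linarith only [hm1], by rw [e8]; linarith only [hm2],
        by rw [e11, e9, e3, e5]; linear_combination hr1,
        by rw [e12, e10, e4, e6]; linear_combination hr2,
        by rw [e5, e9]; linarith only [hp1, hds1],
        by rw [e6, e10]; linarith only [hp2, hds2],
        by rw [e1, e3, e5, e7, e8]; linarith only [hg1, h1α, h1β],
        by rw [e2, e4, e6, e7, e8]; linarith only [hg2, h2α, h1β]⟩
    · intro t ht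
      have e9 : S₁ t = s₁ t := by rw [hS₁]; simp only [if_pos ht]
      have e10 : S₂ t = s₂ t := by rw [hS₂]; simp only [if_pos ht]
      rw [e9, e10]; exact hsto t ht
  -- complementarity
  have hComp : ∀ t ∈ Finset.Icc 1 N,
      C₁ t * D₁ t = 0 ∧ C₂ t * D₂ t = 0 ∧ X₁₂ t * X₂₁ t = 0 := by
    intro t ht
    obtain ⟨_, _, _, _, _, _, hk1, hk2⟩ := hδfacts t ht
    obtain ⟨_, _, _, hk3⟩ := hmfacts t ht
    have e3 : C₁ t = c₁ t - δ₁ t := by rw [hC₁]; simp only [if_pos ht]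
    have e4 : C₂ t = c₂ t - δ₂ t := by rw [hC₂]; simp only [if_pos ht]
    have e5 : D₁ t = d₁ t - α * δ₁ t := by rw [hD₁]; simp only [if_pos ht]
    have e6 : D₂ t = d₂ t - α * δ₂ t := by rw [hD₂]; simp only [if_pos ht]
    have e7 : X₁₂ t = x₁₂ t - m t := by rw [hX₁₂]; simp only [if_pos ht]
    have e8 : X₂₁ t = x₂₁ t - m t := by rw [hX₂₁]; simp only [if_pos ht]
    rw [e3, e4, e5, e6, e7, e8]
    refine ⟨?_, ?_, ?_⟩
    · rcases hk1 with h | h <;> rw [h] <;> ring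
    · rcases hk2 with h | h <;> rw [h] <;> ring
    · rcases hk3 with h | h <;> rw [h] <;> ring
  -- bounds on single grid draws
  have hwbound : ∀ t ∈ Finset.Icc 1 N, w₁ t ≤ C0 N E₁ E₂ ∧ w₂ t ≤ C0 N E₁ E₂ := by
    intro t ht
    have hsum : w₁ t + w₂ t ≤ ∑ r ∈ Finset.Icc 1 N, (w₁ r + w₂ r) :=
      Finset.single_le_sum (f := fun r => w₁ r + w₂ r)
        (fun r hr => add_nonneg ((hctl r hr).1) ((hctl r hr).2.1)) ht
    obtain ⟨hw1, hw2, _⟩ := hctl t ht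
    constructor <;> linarith only [hsum, hcost, hw1, hw2]
  have hM0 : 0 ≤ M0 Smax N E₁ E₂ := M0_nonneg Smax hS.le N E₁ E₂
  have hBB : (0:ℝ) ≤ BB Smax N E₁ E₂ := by unfold BB; linarith only [hM0]
  have hC0M : C0 N E₁ E₂ ≤ M0 Smax N E₁ E₂ := by
    have h1 := Esum_nonneg N E₁ E₂; unfold M0; linarith only [h1, hS]
  have hSM : Smax ≤ M0 Smax N E₁ E₂ := by
    have h1 := Esum_nonneg N E₁ E₂; have h2 := C0_nonneg N E₁ E₂
    unfold M0; linarith only [h1, h2]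
  have hMB : M0 Smax N E₁ E₂ ≤ BB Smax N E₁ E₂ := by unfold BB; linarith only [hM0]
  -- bounds on the exchanged amounts of the new policy
  have hxbound : ∀ t ∈ Finset.Icc 1 N,
      X₁₂ t ≤ M0 Smax N E₁ E₂ ∧ X₂₁ t ≤ M0 Smax N E₁ E₂ := by
    intro t ht
    obtain ⟨hw1, hw2, hc1, hc2, hd1, hd2, hx1, hx2, hr1, hr2, hds1, hds2, hg1, hg2⟩ :=
      hF.2.2.1 t ht
    obtain ⟨hcc1, hcc2, hcc3⟩ := hComp t ht
    obtain ⟨hsp1, hsb1, hsp2, hsb2⟩ := hF.2.2.2 t (hmemS t ht)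
    have hαd1 : α * D₁ t ≤ D₁ t := by
      have := mul_nonneg (sub_nonneg.2 hα.2) hd1; linarith only [this]
    have hαd2 : α * D₂ t ≤ D₂ t := by
      have := mul_nonneg (sub_nonneg.2 hα.2) hd2; linarith only [this]
    have hE1 := E_le_Esum ht E₁ E₂
    have hE2 := E_le_Esum' ht E₁ E₂
    have hW1 : W₁ t ≤ C0 N E₁ E₂ := by
      rw [hW₁]; simp only [if_pos ht]; exact (hwbound t ht).1
    have hW2 : W₂ t ≤ C0 N E₁ E₂ := by
      rw [hW₂]; simp only [if_pos ht]; exact (hwbound t ht).2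
    rcases mul_eq_zero.1 hcc3 with h0 | h0
    · refine ⟨by rw [h0]; exact hM0, ?_⟩
      rw [h0] at hg2
      unfold M0
      linarith only [hg2, hc2, hE2, hW2, hds2, hsb2, hαd2]
    · refine ⟨?_, by rw [h0]; exact hM0⟩
      rw [h0] at hg1
      unfold M0
      linarith only [hg1, hc1, hE1, hW1, hds1, hsb1, hαd1]
  -- on-window bounds for all control variables
  have hwin : ∀ n ∈ Finset.Icc 1 N,
      (0 ≤ W₁ n ∧ W₁ n ≤ BB Smax N E₁ E₂) ∧ (0 ≤ W₂ n ∧ W₂ n ≤ BB Smax N E₁ E₂) ∧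
      (0 ≤ C₁ n ∧ C₁ n ≤ BB Smax N E₁ E₂) ∧ (0 ≤ C₂ n ∧ C₂ n ≤ BB Smax N E₁ E₂) ∧
      (0 ≤ D₁ n ∧ D₁ n ≤ BB Smax N E₁ E₂) ∧ (0 ≤ D₂ n ∧ D₂ n ≤ BB Smax N E₁ E₂) ∧
      (0 ≤ X₁₂ n ∧ X₁₂ n ≤ BB Smax N E₁ E₂) ∧ (0 ≤ X₂₁ n ∧ X₂₁ n ≤ BB Smax N E₁ E₂) := by
    intro n hn
    obtain ⟨hw1, hw2, hc1, hc2, hd1, hd2, hx1, hx2, hr1, hr2, hds1, hds2, hg1, hg2⟩ :=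
      hF.2.2.1 n hn
    obtain ⟨hsp1, hsb1, hsp2, hsb2⟩ := hF.2.2.2 n (hmemS n hn)
    obtain ⟨hxb1, hxb2⟩ := hxbound n hn
    have hαd1 : α * D₁ n ≤ D₁ n := by
      have := mul_nonneg (sub_nonneg.2 hα.2) hd1; linarith only [this]
    have hαd2 : α * D₂ n ≤ D₂ n := by
      have := mul_nonneg (sub_nonneg.2 hα.2) hd2; linarith only [this]
    have hβx1 : β * X₁₂ n ≤ X₁₂ n := by
      have := mul_nonneg (sub_nonneg.2 hβ.2) hx1; linarith only [this]
    have hβx2 : β * X₂₁ n ≤ X₂₁ n := by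
      have := mul_nonneg (sub_nonneg.2 hβ.2) hx2; linarith only [this]
    have hE1 := E_le_Esum hn E₁ E₂
    have hE2 := E_le_Esum' hn E₁ E₂
    have hW1 : W₁ n ≤ C0 N E₁ E₂ := by
      rw [hW₁]; simp only [if_pos hn]; exact (hwbound n hn).1
    have hW2 : W₂ n ≤ C0 N E₁ E₂ := by
      rw [hW₂]; simp only [if_pos hn]; exact (hwbound n hn).2
    have hCb1 : C₁ n ≤ BB Smax N E₁ E₂ := by
      unfold BB M0 at *
      linarith only [hg1, hx1, hE1, hW1, hds1, hsb1, hαd1, hβx2, hxb2]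
    have hCb2 : C₂ n ≤ BB Smax N E₁ E₂ := by
      unfold BB M0 at *
      linarith only [hg2, hx2, hE2, hW2, hds2, hsb2, hαd2, hβx1, hxb1]
    exact ⟨⟨hw1, le_trans hW1 (le_trans hC0M hMB)⟩, ⟨hw2, le_trans hW2 (le_trans hC0M hMB)⟩,
      ⟨hc1, hCb1⟩, ⟨hc2, hCb2⟩,
      ⟨hd1, le_trans (le_trans hds1 hsb1) (le_trans hSM hMB)⟩,
      ⟨hd2, le_trans (le_trans hds2 hsb2) (le_trans hSM hMB)⟩,
      ⟨hx1, le_trans hxb1 hMB⟩, ⟨hx2, le_trans hxb2 hMB⟩⟩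
  -- helpers for off-window values
  have hctlbox : ∀ f : ℕ → ℝ, (∀ t, t ∉ Finset.Icc 1 N → f t = 0) →
      (∀ n ∈ Finset.Icc 1 N, 0 ≤ f n ∧ f n ≤ BB Smax N E₁ E₂) →
      ∀ n, f n ∈ Set.Icc (0:ℝ) (BB Smax N E₁ E₂) := by
    intro f hoff hb n
    by_cases hn : n ∈ Finset.Icc 1 N
    · exact ⟨(hb n hn).1, (hb n hn).2⟩
    · rw [hoff n hn]; exact ⟨le_rfl, hBB⟩
  have hstobox : ∀ f : ℕ → ℝ, (∀ t, t ∉ Finset.Icc 1 (N + 1) → f t = 0) →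
      (∀ n ∈ Finset.Icc 1 (N + 1), 0 ≤ f n ∧ f n ≤ Smax) →
      ∀ n, f n ∈ Set.Icc (0:ℝ) (BB Smax N E₁ E₂) := by
    intro f hoff hb n
    by_cases hn : n ∈ Finset.Icc 1 (N + 1)
    · exact ⟨(hb n hn).1, le_trans (hb n hn).2 (le_trans hSM hMB)⟩
    · rw [hoff n hn]; exact ⟨le_rfl, hBB⟩
  refine ⟨W₁, W₂, C₁, C₂, D₁, D₂, X₁₂, X₂₁, S₁, S₂, ⟨?_, hF, hComp⟩, ?_⟩
  · refine pack_mem_box _ _ _ _ _ _ _ _ _ _ ?_ ?_ ?_ ?_ ?_ ?_ ?_ ?_ ?_ ?_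
    · exact hctlbox W₁ (fun t ht => by rw [hW₁]; simp only [if_neg ht])
        (fun n hn => (hwin n hn).1)
    · exact hctlbox W₂ (fun t ht => by rw [hW₂]; simp only [if_neg ht])
        (fun n hn => (hwin n hn).2.1)
    · exact hctlbox C₁ (fun t ht => by rw [hC₁]; simp only [if_neg ht])
        (fun n hn => (hwin n hn).2.2.1)
    · exact hctlbox C₂ (fun t ht => by rw [hC₂]; simp only [if_neg ht])
        (fun n hn => (hwin n hn).2.2.2.1)
    · exact hctlbox D₁ (fun t ht => by rw [hD₁]; simp only [if_neg ht])
        (fun n hn => (hwin n hn).2.2.2.2.1)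
    · exact hctlbox D₂ (fun t ht => by rw [hD₂]; simp only [if_neg ht])
        (fun n hn => (hwin n hn).2.2.2.2.2.1)
    · exact hctlbox X₁₂ (fun t ht => by rw [hX₁₂]; simp only [if_neg ht])
        (fun n hn => (hwin n hn).2.2.2.2.2.2.1)
    · exact hctlbox X₂₁ (fun t ht => by rw [hX₂₁]; simp only [if_neg ht])
        (fun n hn => (hwin n hn).2.2.2.2.2.2.2)
    · refine hstobox S₁ (fun t ht => by rw [hS₁]; simp only [if_neg ht]) ?_
      intro n hn
      obtain ⟨hsp1, hsb1, _, _⟩ := hF.2.2.2 n hn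
      exact ⟨hsp1, hsb1⟩
    · refine hstobox S₂ (fun t ht => by rw [hS₂]; simp only [if_neg ht]) ?_
      intro n hn
      obtain ⟨_, _, hsp2, hsb2⟩ := hF.2.2.2 n hn
      exact ⟨hsp2, hsb2⟩
  · refine Finset.sum_congr rfl fun t ht => ?_
    rw [hW₁, hW₂]; simp only [if_pos ht]
lemma trivial_feasible (α β Smax : ℝ) (hS : 0 < Smax) (N : ℕ) (E₁ E₂ : ℕ → ℝ) :
    Feasible α β Smax 1 N E₁ E₂ 0 0 (fun t => max 0 (-E₁ t)) (fun t => max 0 (-E₂ t))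
      (fun _ => 0) (fun _ => 0) (fun _ => 0) (fun _ => 0) (fun _ => 0) (fun _ => 0)
      (fun _ => 0) (fun _ => 0) := by
  refine ⟨rfl, rfl, ?_, ?_⟩
  · intro t _
    refine ⟨le_max_left _ _, le_max_left _ _, le_rfl, le_rfl, le_rfl, le_rfl, le_rfl,
      le_rfl, by ring, by ring, le_rfl, le_rfl, ?_, ?_⟩
    · have h := le_max_right 0 (-E₁ t)
      simp only [mul_zero, add_zero, sub_zero]
      linarith only [h]
    · have h := le_max_right 0 (-E₂ t)
      simp only [mul_zero, add_zero, sub_zero]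
      linarith only [h]
  · intro t _
    exact ⟨le_rfl, hS.le, le_rfl, hS.le⟩

end OfflineLPAux

open OfflineLPAux in
/-- the infimum of total grid energy in the offline two-BS problem over
slots `{1, …, N}` from initial state `(0, 0)` is attained, and attained by a feasible
policy satisfying the complementarity conditions `c₁·d₁ = 0`, `c₂·d₂ = 0`,
`x₁₂·x₂₁ = 0` at every slot. -/
theorem offline_LP_attained_with_complementarity
    (α β Smax : ℝ) (hα : 0 ≤ α ∧ α ≤ 1) (hβ : 0 ≤ β ∧ β ≤ 1) (hS : 0 < Smax)
    (N : ℕ) (hN : 1 ≤ N) (E₁ E₂ : ℕ → ℝ) :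
    ∃ w₁ w₂ c₁ c₂ d₁ d₂ x₁₂ x₂₁ s₁ s₂ : ℕ → ℝ,
      Feasible α β Smax 1 N E₁ E₂ 0 0 w₁ w₂ c₁ c₂ d₁ d₂ x₁₂ x₂₁ s₁ s₂ ∧
      (∑ t ∈ Finset.Icc 1 N, (w₁ t + w₂ t)) = Jstar α β Smax 1 N E₁ E₂ 0 0 ∧
      ∀ t ∈ Finset.Icc 1 N,
        c₁ t * d₁ t = 0 ∧ c₂ t * d₂ t = 0 ∧ x₁₂ t * x₂₁ t = 0 := by
  classical
  set S : Set ℝ := {r : ℝ | ∃ w₁ w₂ c₁ c₂ d₁ d₂ x₁₂ x₂₁ s₁ s₂ : ℕ → ℝ,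
    Feasible α β Smax 1 N E₁ E₂ 0 0 w₁ w₂ c₁ c₂ d₁ d₂ x₁₂ x₂₁ s₁ s₂ ∧
    (∑ t ∈ Finset.Icc 1 N, (w₁ t + w₂ t)) = r} with hSdef
  have hJdef : Jstar α β Smax 1 N E₁ E₂ 0 0 = sInf S := rfl
  -- the trivial policy and its nice version
  have htriv := trivial_feasible α β Smax hS N E₁ E₂
  have htrivcost : (∑ t ∈ Finset.Icc 1 N,
      ((fun t => max 0 (-E₁ t)) t + (fun t => max 0 (-E₂ t)) t)) = C0 N E₁ E₂ := rfl
  obtain ⟨U0, U1, U2, U3, U4, U5, U6, U7, U8, U9, hU0mem, hU0cost⟩ :=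
    exists_nice α β Smax hα hβ hS N E₁ E₂ _ _ _ _ _ _ _ _ _ _ htriv (le_of_eq htrivcost)
  have hU0cost' : (∑ t ∈ Finset.Icc 1 N, (U0 t + U1 t)) = C0 N E₁ E₂ :=
    hU0cost.trans htrivcost
  have hKne : (KK α β Smax N E₁ E₂).Nonempty := ⟨_, hU0mem⟩
  -- minimize the continuous cost on the compact set KK
  have hφcont : Continuous (fun u : Fin 10 → ℕ → ℝ => ∑ t ∈ Finset.Icc 1 N, (u 0 t + u 1 t)) :=
    continuous_finset_sum _ fun t _ => by fun_prop
  obtain ⟨u, huK, hmin⟩ :=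
    (isCompact_KK α β Smax N E₁ E₂).exists_isMinOn hKne hφcont.continuousOn
  rw [isMinOn_iff] at hmin
  have huNice : IsNice α β Smax N E₁ E₂ u := huK.2
  have hmem : (∑ t ∈ Finset.Icc 1 N, (u 0 t + u 1 t)) ∈ S :=
    ⟨u 0, u 1, u 2, u 3, u 4, u 5, u 6, u 7, u 8, u 9, huNice.1, rfl⟩
  have hbdd : BddBelow S := by
    refine ⟨0, ?_⟩
    rintro r ⟨w₁, w₂, c₁, c₂, d₁, d₂, x₁₂, x₂₁, s₁, s₂, hf, rfl⟩
    exact Finset.sum_nonneg fun t ht => add_nonneg (hf.2.2.1 t ht).1 (hf.2.2.1 t ht).2.1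
  have hlow : ∀ r ∈ S, (∑ t ∈ Finset.Icc 1 N, (u 0 t + u 1 t)) ≤ r := by
    rintro r ⟨w₁, w₂, c₁, c₂, d₁, d₂, x₁₂, x₂₁, s₁, s₂, hf, rfl⟩
    by_cases hr : (∑ t ∈ Finset.Icc 1 N, (w₁ t + w₂ t)) ≤ C0 N E₁ E₂
    · obtain ⟨W0, W1, W2, W3, W4, W5, W6, W7, W8, W9, hKmem, hceq⟩ :=
        exists_nice α β Smax hα hβ hS N E₁ E₂ _ _ _ _ _ _ _ _ _ _ hf hr
      have h2 : (∑ t ∈ Finset.Icc 1 N, (u 0 t + u 1 t)) ≤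
          ∑ t ∈ Finset.Icc 1 N, (W0 t + W1 t) := hmin _ hKmem
      linarith only [h2, hceq.le]
    · have h2 : (∑ t ∈ Finset.Icc 1 N, (u 0 t + u 1 t)) ≤
          ∑ t ∈ Finset.Icc 1 N, (U0 t + U1 t) := hmin _ hU0mem
      push_neg at hr
      linarith only [h2, hU0cost'.le, hr.le]
  have hJ : (∑ t ∈ Finset.Icc 1 N, (u 0 t + u 1 t)) = Jstar α β Smax 1 N E₁ E₂ 0 0 := by
    rw [hJdef]
    exact le_antisymm (le_csInf ⟨_, hmem⟩ hlow) (csInf_le hbdd hmem)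
  exact ⟨u 0, u 1, u 2, u 3, u 4, u 5, u 6, u 7, u 8, u 9, huNice.1, hJ, huNice.2⟩
end

section
/- Let 0 < α ≤ 1 and 0 < β ≤ 1, fix a state (s₁,s₂) ∈ [0,S_max]² and net energies (E₁,E₂) ∈ ℝ². Let V₁ be the infimum of grid draw w₁+w₂ over one-step feasible actions, and let M be the supremum of the next-state storage sum (s₁+α·c₁−d₁)+(s₂+α·c₂−d₂) over one-step feasible actions with grid draw at most V₁. Then for any γ with 0 < γ < α·β, every one-step feasible action that minimizes (w₁+w₂) − γ·((s₁+α·c₁−d₁)+(s₂+α·c₂−d₂)) over all one-step feasible actions has grid draw exactly V₁ and next-state storage sum exactly M. -/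
/-- A one-step feasible action at state `(s₁, s₂)` with net energies `(E₁, E₂)`. -/
def OneStep (α β Smax s₁ s₂ E₁ E₂ w₁ w₂ c₁ c₂ d₁ d₂ x₁₂ x₂₁ : ℝ) : Prop :=
  0 ≤ w₁ ∧ 0 ≤ w₂ ∧ 0 ≤ c₁ ∧ 0 ≤ c₂ ∧ 0 ≤ d₁ ∧ 0 ≤ d₂ ∧ 0 ≤ x₁₂ ∧ 0 ≤ x₂₁ ∧
  d₁ ≤ s₁ ∧ d₂ ≤ s₂ ∧
  0 ≤ s₁ + α * c₁ - d₁ ∧ s₁ + α * c₁ - d₁ ≤ Smax ∧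
  0 ≤ s₂ + α * c₂ - d₂ ∧ s₂ + α * c₂ - d₂ ≤ Smax ∧
  0 ≤ E₁ + w₁ - c₁ + α * d₁ - x₁₂ + β * x₂₁ ∧
  0 ≤ E₂ + w₂ - c₂ + α * d₂ - x₂₁ + β * x₁₂

/-- One-step minimal grid draw `V₁(s₁, s₂, E₁, E₂)`. -/
noncomputable def V1 (α β Smax s₁ s₂ E₁ E₂ : ℝ) : ℝ :=
  sInf {r : ℝ | ∃ w₁ w₂ c₁ c₂ d₁ d₂ x₁₂ x₂₁ : ℝ,
    OneStep α β Smax s₁ s₂ E₁ E₂ w₁ w₂ c₁ c₂ d₁ d₂ x₁₂ x₂₁ ∧ w₁ + w₂ = r}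

noncomputable def eps (α E s τ : ℝ) : ℝ := E + min (α*(s-τ)) ((s-τ)/α)

noncomputable def Vf (β e₁ e₂ : ℝ) : ℝ :=
  max 0 (max (-e₁-β*e₂) (max (-e₂-β*e₁) (-e₁-e₂)))

lemma Vf_nonneg (β e₁ e₂ : ℝ) : 0 ≤ Vf β e₁ e₂ := le_max_left _ _

lemma Vf_le {β e₁ e₂ r : ℝ} (h0 : 0 ≤ r) (h1 : -e₁-β*e₂ ≤ r) (h2 : -e₂-β*e₁ ≤ r)
    (h3 : -e₁-e₂ ≤ r) : Vf β e₁ e₂ ≤ r :=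
  max_le h0 (max_le h1 (max_le h2 h3))

lemma le_Vf1 (β e₁ e₂ : ℝ) : -e₁-β*e₂ ≤ Vf β e₁ e₂ :=
  le_trans (le_max_left _ _) (le_max_right _ _)

lemma le_Vf2 (β e₁ e₂ : ℝ) : -e₂-β*e₁ ≤ Vf β e₁ e₂ :=
  le_trans (le_trans (le_max_left _ _) (le_max_right _ _)) (le_max_right _ _)

lemma le_Vf3 (β e₁ e₂ : ℝ) : -e₁-e₂ ≤ Vf β e₁ e₂ :=
  le_trans (le_trans (le_max_right _ _) (le_max_right _ _)) (le_max_right _ _)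

lemma Vf_anti {β e₁ e₂ f₁ f₂ : ℝ} (hβ : 0 ≤ β) (h1 : e₁ ≤ f₁) (h2 : e₂ ≤ f₂) :
    Vf β f₁ f₂ ≤ Vf β e₁ e₂ := by
  refine Vf_le (Vf_nonneg _ _ _) ?_ ?_ ?_
  · refine le_trans ?_ (le_Vf1 β e₁ e₂); nlinarith [mul_le_mul_of_nonneg_left h2 hβ]
  · refine le_trans ?_ (le_Vf2 β e₁ e₂); nlinarith [mul_le_mul_of_nonneg_left h1 hβ]
  · refine le_trans ?_ (le_Vf3 β e₁ e₂); linarith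

lemma eps_le_eps {α : ℝ} (E s : ℝ) (hα0 : 0 < α) (hα1 : α ≤ 1) {τ' τ : ℝ} (h : τ' ≤ τ) :
    eps α E s τ + α*(τ-τ') ≤ eps α E s τ' := by
  unfold eps
  have h1 : min (α*(s-τ)) ((s-τ)/α) ≤ α*(s-τ) := min_le_left _ _
  have h2 : min (α*(s-τ)) ((s-τ)/α) ≤ (s-τ)/α := min_le_right _ _
  have key : min (α*(s-τ)) ((s-τ)/α) + α*(τ-τ') ≤ min (α*(s-τ')) ((s-τ')/α) := by
    refine le_min ?_ ?_
    · nlinarith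
    · have hd : (s-τ)/α + (τ-τ')/α = (s-τ')/α := by ring
      have hmm : α*(τ-τ') ≤ (τ-τ')/α := by
        rw [le_div_iff₀ hα0]
        nlinarith [mul_nonneg (sub_nonneg.2 h) (sub_nonneg.2 (by nlinarith : α*α ≤ 1))]
      linarith
  linarith

lemma eps_zero {α : ℝ} (E s : ℝ) (hα0 : 0 < α) (hα1 : α ≤ 1) (hs : 0 ≤ s) :
    eps α E s 0 = E + α*s := by
  unfold eps
  have : min (α*(s-0)) ((s-0)/α) = α*s := by
    rw [min_eq_left]
    · ring_nf
    · rw [le_div_iff₀ hα0]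
      nlinarith [mul_nonneg hs (sub_nonneg.2 (by nlinarith : α*α ≤ 1))]
  rw [this]

lemma eps_eff {α : ℝ} (E s : ℝ) (hα0 : 0 < α) (hα1 : α ≤ 1) {c d : ℝ} (hc : 0 ≤ c)
    (hd : 0 ≤ d) : E - c + α*d ≤ eps α E s (s + α*c - d) := by
  unfold eps
  have hrw : s - (s + α*c - d) = d - α*c := by ring
  rw [hrw]
  have g1 : -c + α*d ≤ α*(d-α*c) := by
    nlinarith [mul_nonneg hc (sub_nonneg.2 (by nlinarith : α*α ≤ 1))]
  have g2 : -c + α*d ≤ (d-α*c)/α := by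
    rw [le_div_iff₀ hα0]
    nlinarith [mul_nonneg hd (sub_nonneg.2 (by nlinarith : α*α ≤ 1))]
  have := le_min g1 g2
  linarith

lemma eps_canon {α : ℝ} (E s : ℝ) (hα0 : 0 < α) (hα1 : α ≤ 1) (τ : ℝ) :
    eps α E s τ = E - max 0 (τ-s) / α + α * max 0 (s-τ) := by
  unfold eps
  rcases le_total τ s with h | h
  · rw [max_eq_left (by linarith), max_eq_right (by linarith), min_eq_left]
    · ring
    · rw [le_div_iff₀ hα0]
      nlinarith [mul_nonneg (sub_nonneg.2 h) (sub_nonneg.2 (by nlinarith : α*α ≤ 1))]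
  · rw [max_eq_right (by linarith), max_eq_left (by linarith), min_eq_right]
    · field_simp; ring
    · rw [div_le_iff₀ hα0]
      nlinarith [mul_nonneg (sub_nonneg.2 h) (sub_nonneg.2 (by nlinarith : α*α ≤ 1))]

lemma onestep_lb {α β Smax s₁ s₂ E₁ E₂ w₁ w₂ c₁ c₂ d₁ d₂ x₁₂ x₂₁ : ℝ}
    (hα0 : 0 < α) (hα1 : α ≤ 1) (hβ0 : 0 < β) (hβ1 : β ≤ 1)
    (h : OneStep α β Smax s₁ s₂ E₁ E₂ w₁ w₂ c₁ c₂ d₁ d₂ x₁₂ x₂₁) :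
    Vf β (eps α E₁ s₁ (s₁ + α * c₁ - d₁)) (eps α E₂ s₂ (s₂ + α * c₂ - d₂)) ≤ w₁ + w₂ := by
  obtain ⟨hw1, hw2, hc1, hc2, hd1, hd2, hx12, hx21, hds1, hds2, ht1l, ht1u, ht2l, ht2u,
    hE1, hE2⟩ := h
  have he1 : E₁ - c₁ + α*d₁ ≤ eps α E₁ s₁ (s₁ + α * c₁ - d₁) := eps_eff E₁ s₁ hα0 hα1 hc1 hd1
  have he2 : E₂ - c₂ + α*d₂ ≤ eps α E₂ s₂ (s₂ + α * c₂ - d₂) := eps_eff E₂ s₂ hα0 hα1 hc2 hd2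
  have hbe1 := mul_le_mul_of_nonneg_left he1 hβ0.le
  have hbe2 := mul_le_mul_of_nonneg_left he2 hβ0.le
  have hb2 := mul_nonneg hβ0.le hE2
  have hb1 := mul_nonneg hβ0.le hE1
  refine Vf_le (by linarith) ?_ ?_ ?_
  · nlinarith [mul_nonneg (sub_nonneg.2 hβ1) hw2, mul_nonneg (sub_nonneg.2 (by nlinarith : β*β ≤ 1)) hx12]
  · nlinarith [mul_nonneg (sub_nonneg.2 hβ1) hw1, mul_nonneg (sub_nonneg.2 (by nlinarith : β*β ≤ 1)) hx21]
  · nlinarith [mul_nonneg (sub_nonneg.2 hβ1) hx12, mul_nonneg (sub_nonneg.2 hβ1) hx21]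

set_option maxHeartbeats 1000000 in
lemma onestep_witness {α β Smax : ℝ} (s₁ s₂ E₁ E₂ : ℝ)
    (hα0 : 0 < α) (hα1 : α ≤ 1) (hβ0 : 0 < β) (hβ1 : β ≤ 1)
    (hs1 : 0 ≤ s₁) (hs2 : 0 ≤ s₂)
    {τ₁ τ₂ : ℝ} (h1l : 0 ≤ τ₁) (h1u : τ₁ ≤ Smax) (h2l : 0 ≤ τ₂) (h2u : τ₂ ≤ Smax) :
    ∃ w₁ w₂ c₁ c₂ d₁ d₂ x₁₂ x₂₁ : ℝ,
      OneStep α β Smax s₁ s₂ E₁ E₂ w₁ w₂ c₁ c₂ d₁ d₂ x₁₂ x₂₁ ∧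
      w₁ + w₂ = Vf β (eps α E₁ s₁ τ₁) (eps α E₂ s₂ τ₂) ∧
      s₁ + α * c₁ - d₁ = τ₁ ∧ s₂ + α * c₂ - d₂ = τ₂ := by
  set e₁ := eps α E₁ s₁ τ₁ with he₁def
  set e₂ := eps α E₂ s₂ τ₂ with he₂def
  set c₁ := max 0 (τ₁ - s₁) / α with hc₁def
  set c₂ := max 0 (τ₂ - s₂) / α with hc₂def
  set d₁ := max 0 (s₁ - τ₁) with hd₁def
  set d₂ := max 0 (s₂ - τ₂) with hd₂def
  have hc1 : 0 ≤ c₁ := div_nonneg (le_max_left _ _) hα0.le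
  have hc2 : 0 ≤ c₂ := div_nonneg (le_max_left _ _) hα0.le
  have hd1 : 0 ≤ d₁ := le_max_left _ _
  have hd2 : 0 ≤ d₂ := le_max_left _ _
  have hds1 : d₁ ≤ s₁ := max_le hs1 (by linarith)
  have hds2 : d₂ ≤ s₂ := max_le hs2 (by linarith)
  have hst1 : s₁ + α * c₁ - d₁ = τ₁ := by
    rw [hc₁def, hd₁def]
    rcases le_total τ₁ s₁ with h | h
    · rw [max_eq_left (by linarith), max_eq_right (by linarith)]; field_simp; ring
    · rw [max_eq_right (by linarith), max_eq_left (by linarith)]; field_simp; ring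
  have hst2 : s₂ + α * c₂ - d₂ = τ₂ := by
    rw [hc₂def, hd₂def]
    rcases le_total τ₂ s₂ with h | h
    · rw [max_eq_left (by linarith), max_eq_right (by linarith)]; field_simp; ring
    · rw [max_eq_right (by linarith), max_eq_left (by linarith)]; field_simp; ring
  have hen1 : E₁ - c₁ + α*d₁ = e₁ := by
    rw [he₁def, eps_canon E₁ s₁ hα0 hα1, hc₁def, hd₁def]
  have hen2 : E₂ - c₂ + α*d₂ = e₂ := by
    rw [he₂def, eps_canon E₂ s₂ hα0 hα1, hc₂def, hd₂def]
  rcases le_or_gt 0 e₁ with hp1 | hn1 <;> rcases le_or_gt 0 e₂ with hp2 | hn2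
  · -- both surplus: w = 0, x = 0
    refine ⟨0, 0, c₁, c₂, d₁, d₂, 0, 0,
      ⟨le_refl 0, le_refl 0, hc1, hc2, hd1, hd2, le_refl 0, le_refl 0, hds1, hds2,
        by rw [hst1]; exact h1l, by rw [hst1]; exact h1u,
        by rw [hst2]; exact h2l, by rw [hst2]; exact h2u,
        by linarith, by linarith⟩, ?_, hst1, hst2⟩
    have : Vf β e₁ e₂ = 0 := le_antisymm
      (Vf_le le_rfl (by nlinarith [mul_nonneg hβ0.le hp2])
        (by nlinarith [mul_nonneg hβ0.le hp1]) (by linarith)) (Vf_nonneg _ _ _)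
    rw [this]; ring
  · -- e₁ ≥ 0 > e₂ : send x₁₂ = e₁, w₂ = max 0 (-e₂-β*e₁)
    refine ⟨0, max 0 (-e₂-β*e₁), c₁, c₂, d₁, d₂, e₁, 0,
      ⟨le_refl 0, le_max_left _ _, hc1, hc2, hd1, hd2, hp1, le_refl 0, hds1, hds2,
        by rw [hst1]; exact h1l, by rw [hst1]; exact h1u,
        by rw [hst2]; exact h2l, by rw [hst2]; exact h2u,
        by linarith, by linarith [le_max_right 0 (-e₂-β*e₁)]⟩, ?_, hst1, hst2⟩
    have : Vf β e₁ e₂ = max 0 (-e₂-β*e₁) := by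
      refine le_antisymm (Vf_le (le_max_left _ _) ?_ (le_max_right _ _) ?_)
        (max_le (Vf_nonneg _ _ _) (le_Vf2 _ _ _))
      · refine le_trans ?_ (le_max_right _ _)
        nlinarith [mul_nonneg (sub_nonneg.2 hβ1) (sub_nonneg.2 (le_of_lt (lt_of_lt_of_le hn2 hp1)))]
      · refine le_trans ?_ (le_max_right _ _)
        nlinarith [mul_nonneg (sub_nonneg.2 hβ1) hp1]
    rw [this]; ring
  · -- e₂ ≥ 0 > e₁ : send x₂₁ = e₂, w₁ = max 0 (-e₁-β*e₂)
    refine ⟨max 0 (-e₁-β*e₂), 0, c₁, c₂, d₁, d₂, 0, e₂,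
      ⟨le_max_left _ _, le_refl 0, hc1, hc2, hd1, hd2, le_refl 0, hp2, hds1, hds2,
        by rw [hst1]; exact h1l, by rw [hst1]; exact h1u,
        by rw [hst2]; exact h2l, by rw [hst2]; exact h2u,
        by linarith [le_max_right 0 (-e₁-β*e₂)], by linarith⟩, ?_, hst1, hst2⟩
    have : Vf β e₁ e₂ = max 0 (-e₁-β*e₂) := by
      refine le_antisymm (Vf_le (le_max_left _ _) (le_max_right _ _) ?_ ?_)
        (max_le (Vf_nonneg _ _ _) (le_Vf1 _ _ _))
      · refine le_trans ?_ (le_max_right _ _)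
        nlinarith [mul_nonneg (sub_nonneg.2 hβ1) (sub_nonneg.2 (le_of_lt (lt_of_lt_of_le hn1 hp2)))]
      · refine le_trans ?_ (le_max_right _ _)
        nlinarith [mul_nonneg (sub_nonneg.2 hβ1) hp2]
    rw [this]; ring
  · -- both deficit: w₁ = -e₁, w₂ = -e₂
    refine ⟨-e₁, -e₂, c₁, c₂, d₁, d₂, 0, 0,
      ⟨by linarith, by linarith, hc1, hc2, hd1, hd2, le_refl 0, le_refl 0, hds1, hds2,
        by rw [hst1]; exact h1l, by rw [hst1]; exact h1u,
        by rw [hst2]; exact h2l, by rw [hst2]; exact h2u,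
        by linarith, by linarith⟩, ?_, hst1, hst2⟩
    have : Vf β e₁ e₂ = -e₁-e₂ := by
      refine le_antisymm (Vf_le (by linarith) ?_ ?_ le_rfl) (le_Vf3 _ _ _)
      · nlinarith [mul_nonneg (sub_nonneg.2 hβ1) (le_of_lt (neg_pos.2 hn2))]
      · nlinarith [mul_nonneg (sub_nonneg.2 hβ1) (le_of_lt (neg_pos.2 hn1))]
    rw [this]; ring

set_option maxHeartbeats 1000000 in
/-- for `0 < γ < α·β`, every one-step feasible action minimizing
`(w₁+w₂) − γ·(next-state storage sum)` achieves grid draw exactly `V₁` and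
next-state storage sum exactly `M`. -/
theorem greedy_combined_LP
    (α β Smax : ℝ) (hα : 0 < α ∧ α ≤ 1) (hβ : 0 < β ∧ β ≤ 1) (hS : 0 < Smax)
    (s₁ s₂ : ℝ) (hs₁ : 0 ≤ s₁ ∧ s₁ ≤ Smax) (hs₂ : 0 ≤ s₂ ∧ s₂ ≤ Smax)
    (E₁ E₂ : ℝ) (γ : ℝ) (hγ : 0 < γ ∧ γ < α * β)
    (M : ℝ)
    (hM : M = sSup {r : ℝ | ∃ w₁ w₂ c₁ c₂ d₁ d₂ x₁₂ x₂₁ : ℝ,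
      OneStep α β Smax s₁ s₂ E₁ E₂ w₁ w₂ c₁ c₂ d₁ d₂ x₁₂ x₂₁ ∧
      w₁ + w₂ ≤ V1 α β Smax s₁ s₂ E₁ E₂ ∧
      (s₁ + α * c₁ - d₁) + (s₂ + α * c₂ - d₂) = r})
    (w₁ w₂ c₁ c₂ d₁ d₂ x₁₂ x₂₁ : ℝ)
    (hfeas : OneStep α β Smax s₁ s₂ E₁ E₂ w₁ w₂ c₁ c₂ d₁ d₂ x₁₂ x₂₁)
    (hmin : ∀ w₁' w₂' c₁' c₂' d₁' d₂' x₁₂' x₂₁' : ℝ,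
      OneStep α β Smax s₁ s₂ E₁ E₂ w₁' w₂' c₁' c₂' d₁' d₂' x₁₂' x₂₁' →
      (w₁ + w₂) - γ * ((s₁ + α * c₁ - d₁) + (s₂ + α * c₂ - d₂)) ≤
        (w₁' + w₂') - γ * ((s₁ + α * c₁' - d₁') + (s₂ + α * c₂' - d₂'))) :
    w₁ + w₂ = V1 α β Smax s₁ s₂ E₁ E₂ ∧
      (s₁ + α * c₁ - d₁) + (s₂ + α * c₂ - d₂) = M := by
  obtain ⟨hα0, hα1⟩ := hα
  obtain ⟨hβ0, hβ1⟩ := hβ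
  obtain ⟨hγ0, hγαβ⟩ := hγ
  obtain ⟨hs1l, hs1u⟩ := hs₁
  obtain ⟨hs2l, hs2u⟩ := hs₂
  have hαβ : 0 < α*β := mul_pos hα0 hβ0
  set v : ℝ := Vf β (E₁ + α*s₁) (E₂ + α*s₂) with hvdef
  set Sd : Set ℝ := {r : ℝ | ∃ w₁ w₂ c₁ c₂ d₁ d₂ x₁₂ x₂₁ : ℝ,
    OneStep α β Smax s₁ s₂ E₁ E₂ w₁ w₂ c₁ c₂ d₁ d₂ x₁₂ x₂₁ ∧ w₁ + w₂ = r} with hSddef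
  have hV1def : V1 α β Smax s₁ s₂ E₁ E₂ = sInf Sd := rfl
  set Sp : Set ℝ := {r : ℝ | ∃ w₁ w₂ c₁ c₂ d₁ d₂ x₁₂ x₂₁ : ℝ,
      OneStep α β Smax s₁ s₂ E₁ E₂ w₁ w₂ c₁ c₂ d₁ d₂ x₁₂ x₂₁ ∧
      w₁ + w₂ ≤ V1 α β Smax s₁ s₂ E₁ E₂ ∧
      (s₁ + α * c₁ - d₁) + (s₂ + α * c₂ - d₂) = r} with hSpdef
  have hMdef : M = sSup Sp := hM
  -- v is a lower bound on draws
  have hlb : ∀ r ∈ Sd, v ≤ r := by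
    rintro r ⟨w₁', w₂', c₁', c₂', d₁', d₂', x₁₂', x₂₁', hOS, hr⟩
    have hlow := onestep_lb hα0 hα1 hβ0 hβ1 hOS
    have ht1l' : 0 ≤ s₁ + α * c₁' - d₁' := hOS.2.2.2.2.2.2.2.2.2.2.1
    have ht2l' : 0 ≤ s₂ + α * c₂' - d₂' := hOS.2.2.2.2.2.2.2.2.2.2.2.2.1
    have hm1 : eps α E₁ s₁ (s₁ + α * c₁' - d₁') ≤ E₁ + α*s₁ := by
      have := eps_le_eps E₁ s₁ hα0 hα1 ht1l'
      rw [eps_zero E₁ s₁ hα0 hα1 hs1l] at this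
      linarith only [this, mul_nonneg hα0.le ht1l']
    have hm2 : eps α E₂ s₂ (s₂ + α * c₂' - d₂') ≤ E₂ + α*s₂ := by
      have := eps_le_eps E₂ s₂ hα0 hα1 ht2l'
      rw [eps_zero E₂ s₂ hα0 hα1 hs2l] at this
      linarith only [this, mul_nonneg hα0.le ht2l']
    have := Vf_anti hβ0.le hm1 hm2
    linarith
  have hmem_star : (w₁ + w₂) ∈ Sd :=
    ⟨w₁, w₂, c₁, c₂, d₁, d₂, x₁₂, x₂₁, hfeas, rfl⟩
  have hbddSd : BddBelow Sd := ⟨v, hlb⟩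
  -- witness achieving v with zero storage
  obtain ⟨a₁, a₂, b₁, b₂, e₁, e₂, f₁, f₂, hOS0, hdr0, hst01, hst02⟩ :=
    onestep_witness (α := α) (β := β) (Smax := Smax) s₁ s₂ E₁ E₂ hα0 hα1 hβ0 hβ1 hs1l hs2l
      (le_refl (0:ℝ)) hS.le (le_refl (0:ℝ)) hS.le
  rw [eps_zero E₁ s₁ hα0 hα1 hs1l, eps_zero E₂ s₂ hα0 hα1 hs2l] at hdr0
  have hvmem : v ∈ Sd := ⟨a₁, a₂, b₁, b₂, e₁, e₂, f₁, f₂, hOS0, hdr0⟩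
  have hV1v : V1 α β Smax s₁ s₂ E₁ E₂ = v := by
    rw [hV1def]
    exact le_antisymm (csInf_le hbddSd hvmem) (le_csInf ⟨_, hmem_star⟩ hlb)
  have hvG : v ≤ w₁ + w₂ := hlb _ hmem_star
  -- Sp is bounded above
  have hbddSp : BddAbove Sp := by
    refine ⟨Smax + Smax, ?_⟩
    rintro r ⟨w₁', w₂', c₁', c₂', d₁', d₂', x₁₂', x₂₁', hOS, _, hr⟩
    have h1 := hOS.2.2.2.2.2.2.2.2.2.2.2.1
    have h2 := hOS.2.2.2.2.2.2.2.2.2.2.2.2.2.1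
    linarith
  have h0mem : (0:ℝ) ∈ Sp := by
    refine ⟨a₁, a₂, b₁, b₂, e₁, e₂, f₁, f₂, hOS0, ?_, by rw [hst01, hst02]; ring⟩
    rw [hV1v, hdr0]
  have hSpne : Sp.Nonempty := ⟨0, h0mem⟩
  -- abbreviations
  set T : ℝ := (s₁ + α * c₁ - d₁) + (s₂ + α * c₂ - d₂) with hTdef
  set G : ℝ := w₁ + w₂ with hGdef
  -- upper bound on M from optimality of the minimizer
  have h5 : M ≤ T + (v - G)/γ := by
    rw [hMdef]
    refine csSup_le hSpne ?_
    rintro r ⟨w₁', w₂', c₁', c₂', d₁', d₂', x₁₂', x₂₁', hOS, hdr, hr⟩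
    have hopt := hmin w₁' w₂' c₁' c₂' d₁' d₂' x₁₂' x₂₁' hOS
    rw [hV1v] at hdr
    rw [hr] at hopt
    have hstep : r - T ≤ (v - G)/γ := by
      rw [le_div_iff₀ hγ0]
      linarith only [hopt, hdr, hγ0]
    linarith
  -- frontier: a member of Sp with storage ≥ T - (G - v)/(α*β)
  have hf := hfeas
  obtain ⟨hw1, hw2, hc1, hc2, hd1, hd2, hx12, hx21, hds1, hds2, ht1l, ht1u, ht2l, ht2u,
    hE1c, hE2c⟩ := hf
  set t1 : ℝ := s₁ + α * c₁ - d₁ with ht1def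
  set t2 : ℝ := s₂ + α * c₂ - d₂ with ht2def
  set G' : ℝ := Vf β (eps α E₁ s₁ t1) (eps α E₂ s₂ t2) with hG'def
  have hG'le : G' ≤ G := onestep_lb hα0 hα1 hβ0 hβ1 hfeas
  have hvG' : v ≤ G' := by
    have hm1 : eps α E₁ s₁ t1 ≤ E₁ + α*s₁ := by
      have := eps_le_eps E₁ s₁ hα0 hα1 ht1l
      rw [eps_zero E₁ s₁ hα0 hα1 hs1l] at this
      linarith only [this, mul_nonneg hα0.le ht1l]
    have hm2 : eps α E₂ s₂ t2 ≤ E₂ + α*s₂ := by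
      have := eps_le_eps E₂ s₂ hα0 hα1 ht2l
      rw [eps_zero E₂ s₂ hα0 hα1 hs2l] at this
      linarith only [this, mul_nonneg hα0.le ht2l]
    exact Vf_anti hβ0.le hm1 hm2
  set D : ℝ := (G' - v)/(α*β) with hDdef
  have hD0 : 0 ≤ D := div_nonneg (by linarith) hαβ.le
  have hDle : D ≤ (G - v)/(α*β) := by
    rw [hDdef]
    exact (div_le_div_iff_of_pos_right hαβ).2 (by linarith)
  have h6 : T - (G - v)/(α*β) ≤ M := by
    by_cases hcase : t1 + t2 ≤ D
    · have h0M : (0:ℝ) ≤ M := by rw [hMdef]; exact le_csSup hbddSp h0mem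
      rw [hTdef]
      linarith
    · push_neg at hcase
      set u : ℝ := t1 + t2 - D with hudef
      have hu0 : 0 ≤ u := by rw [hudef]; linarith
      set τ₁ : ℝ := min u t1 with hτ₁def
      set τ₂ : ℝ := u - τ₁ with hτ₂def
      have hτ₁l : 0 ≤ τ₁ := le_min hu0 ht1l
      have hτ₁t : τ₁ ≤ t1 := min_le_right _ _
      have hτ₁u : τ₁ ≤ Smax := le_trans hτ₁t ht1u
      have hτ₂l : 0 ≤ τ₂ := by rw [hτ₂def]; have := min_le_left u t1; linarith
      have hτ₂t : τ₂ ≤ t2 := by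
        rcases le_total u t1 with h | h
        · have he : τ₁ = u := min_eq_left h
          rw [hτ₂def, he]; linarith
        · have he : τ₁ = t1 := min_eq_right h
          rw [hτ₂def, he, hudef]; linarith
      have hτ₂u : τ₂ ≤ Smax := le_trans hτ₂t ht2u
      obtain ⟨p₁, p₂, q₁, q₂, r₁, r₂, y₁, y₂, hOSb, hdrb, hstb1, hstb2⟩ :=
        onestep_witness (α := α) (β := β) (Smax := Smax) s₁ s₂ E₁ E₂ hα0 hα1 hβ0 hβ1
          hs1l hs2l hτ₁l hτ₁u hτ₂l hτ₂u
      have hA1 : eps α E₁ s₁ t1 + α*(t1-τ₁) ≤ eps α E₁ s₁ τ₁ := eps_le_eps E₁ s₁ hα0 hα1 hτ₁t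
      have hA2 : eps α E₂ s₂ t2 + α*(t2-τ₂) ≤ eps α E₂ s₂ τ₂ := eps_le_eps E₂ s₂ hα0 hα1 hτ₂t
      have hsum : α*β*(t1-τ₁) + α*β*(t2-τ₂) = G' - v := by
        have h1 : (t1-τ₁) + (t2-τ₂) = D := by rw [hτ₂def, hudef]; ring
        have h2 : α*β*D = G' - v := by rw [hDdef]; field_simp
        linear_combination (α*β)*h1 + h2
      have hterm1 : -(eps α E₁ s₁ t1) - β*(eps α E₂ s₂ t2) ≤ G' := by
        rw [hG'def]; exact le_Vf1 _ _ _
      have hterm2 : -(eps α E₂ s₂ t2) - β*(eps α E₁ s₁ t1) ≤ G' := by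
        rw [hG'def]; exact le_Vf2 _ _ _
      have hterm3 : -(eps α E₁ s₁ t1) - (eps α E₂ s₂ t2) ≤ G' := by
        rw [hG'def]; exact le_Vf3 _ _ _
      have hv0 : 0 ≤ v := by rw [hvdef]; exact Vf_nonneg _ _ _
      have hp1 : 0 ≤ α*(1-β)*(t1-τ₁) :=
        mul_nonneg (mul_nonneg hα0.le (by linarith)) (by linarith)
      have hp2 : 0 ≤ α*(1-β)*(t2-τ₂) :=
        mul_nonneg (mul_nonneg hα0.le (by linarith)) (by linarith)
      have k1 := mul_le_mul_of_nonneg_left hA1 hβ0.le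
      have k2 := mul_le_mul_of_nonneg_left hA2 hβ0.le
      have hdrv : Vf β (eps α E₁ s₁ τ₁) (eps α E₂ s₂ τ₂) ≤ v := by
        refine Vf_le hv0 ?_ ?_ ?_
        · linarith only [hA1, k2, hterm1, hsum, hp1]
        · linarith only [hA2, k1, hterm2, hsum, hp2]
        · linarith only [hA1, hA2, hterm3, hsum, hp1, hp2]
      have humem : u ∈ Sp := by
        refine ⟨p₁, p₂, q₁, q₂, r₁, r₂, y₁, y₂, hOSb, ?_, ?_⟩
        · rw [hV1v, hdrb]; exact hdrv
        · rw [hstb1, hstb2, hτ₂def]; ring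
      have huM : u ≤ M := by rw [hMdef]; exact le_csSup hbddSp humem
      rw [hTdef]
      have : T - (G - v)/(α*β) ≤ u := by rw [hudef, hTdef]; linarith
      rw [hTdef] at this
      linarith
  -- endgame
  have hGv : G = v := by
    by_contra hne
    have hlt : v < G := lt_of_le_of_ne hvG (Ne.symm hne)
    have hdd : (G - v)/(α*β) < (G - v)/γ :=
      div_lt_div_of_pos_left (by linarith) hγ0 hγαβ
    have he : (v - G)/γ = -((G - v)/γ) := by ring
    linarith
  have hz1 : (v - G)/γ = 0 := by rw [hGv]; simp
  have hz2 : (G - v)/(α*β) = 0 := by rw [hGv]; simp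
  constructor
  · rw [hV1v]; exact hGv
  · exact le_antisymm (by linarith) (by linarith)
end

section
/- If β = 1 (lossless energy transfer), then for any initial storage state (σ₁,σ₂) ∈ [0,S_max]², the optimal cost of the two-base-station problem equals the optimal cost of the single-base-station problem with the same efficiency α, combined profile E(t) = E₁(t) + E₂(t), storage capacity 2·S_max, and initial storage σ₁ + σ₂; that is, J*_k(σ₁,σ₂) = J*_single(σ₁+σ₂; E₁+E₂, 2·S_max). -/
section helpers

lemma split_fun_exists (M σ₁ σ₂ : ℝ) (hM : 0 < M) (h10 : 0 ≤ σ₁) (h1M : σ₁ ≤ M)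
    (h20 : 0 ≤ σ₂) (h2M : σ₂ ≤ M) :
    ∃ g : ℝ → ℝ, g (σ₁ + σ₂) = σ₁ ∧
      (∀ s, 0 ≤ s → s ≤ 2 * M → 0 ≤ g s ∧ g s ≤ M ∧ 0 ≤ s - g s ∧ s - g s ≤ M) ∧
      (∀ s s', s ≤ s' → g s ≤ g s' ∧ s - g s ≤ s' - g s') := by
  refine ⟨fun s => min M (min s σ₁ + max 0 (s - (σ₁ + σ₂))), ?_, ?_, ?_⟩
  · simp only
    rw [min_eq_right (by linarith : σ₁ ≤ σ₁ + σ₂), max_eq_left (by linarith)]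
    simp [min_eq_right h1M]
  · intro s hs0 hs2
    simp only [min_def, max_def]
    split_ifs <;> refine ⟨by linarith, by linarith, by linarith, by linarith⟩
  · intro s s' hss
    simp only [min_def, max_def]
    split_ifs <;> exact ⟨by linarith, by linarith⟩

lemma storage_split_step (α a a' : ℝ) (hz : α = 0 → a' ≤ a) :
    α * (max 0 (a' - a) / α) - max 0 (a - a') = a' - a := by
  by_cases h : α = 0
  · have := hz h
    rw [h, max_eq_left (by linarith : a' - a ≤ 0), max_eq_right (by linarith : (0:ℝ) ≤ a - a')]
    ring
  · rw [mul_div_cancel₀ _ h]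
    rcases le_total a a' with hle | hle
    · rw [max_eq_right (by linarith : (0:ℝ) ≤ a' - a), max_eq_left (by linarith : a - a' ≤ 0)]
      ring
    · rw [max_eq_left (by linarith : a' - a ≤ 0), max_eq_right (by linarith : (0:ℝ) ≤ a - a')]
      ring

lemma cost_bound (α c d D1 D2 : ℝ) (hα0 : 0 ≤ α) (hα1 : α ≤ 1) (hc : 0 ≤ c) (hd : 0 ≤ d)
    (hsum : D1 + D2 = α * c - d)
    (hsign : (0 ≤ D1 ∧ 0 ≤ D2) ∨ (D1 ≤ 0 ∧ D2 ≤ 0)) :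
    max 0 D1 / α + max 0 D2 / α - α * (max 0 (-D1) + max 0 (-D2)) ≤ c - α * d := by
  rcases hsign with ⟨h1, h2⟩ | ⟨h1, h2⟩
  · rw [max_eq_right h1, max_eq_right h2, max_eq_left (by linarith : -D1 ≤ 0),
      max_eq_left (by linarith : -D2 ≤ 0)]
    by_cases hz : α = 0
    · subst hz
      simp only [div_zero, zero_mul]
      linarith
    · have hzpos : 0 < α := lt_of_le_of_ne hα0 (Ne.symm hz)
      have e1 : D1 / α + D2 / α - α * (0 + 0) = c - d / α := by
        field_simp
        linarith [hsum]
      rw [e1]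
      have key : 0 ≤ d * ((1 - α) * (1 + α)) :=
        mul_nonneg hd (mul_nonneg (by linarith) (by linarith))
      have : α * d ≤ d / α := by
        rw [le_div_iff₀ hzpos]
        nlinarith [key]
      linarith
  · rw [max_eq_left h1, max_eq_left h2, max_eq_right (by linarith : (0:ℝ) ≤ -D1),
      max_eq_right (by linarith : (0:ℝ) ≤ -D2)]
    simp only [zero_div]
    have key : 0 ≤ c * ((1 - α) * (1 + α)) :=
      mul_nonneg hc (mul_nonneg (by linarith) (by linarith))
    nlinarith [key]

lemma transfer_bal (A B : ℝ) (h : 0 ≤ A + B) :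
    0 ≤ A - max 0 (-B) + 1 * max 0 (-A) ∧ 0 ≤ B - max 0 (-A) + 1 * max 0 (-B) := by
  rcases le_total A 0 with hA | hA <;> rcases le_total B 0 with hB | hB <;>
    simp only [max_def] <;> split_ifs <;> constructor <;> linarith

end helpers

/-- A feasible policy for the single-base-station problem with storage efficiency `α`,
capacity `Sbar`, profile `E`, over slots `{k, …, N}` from initial storage `σ`. -/
def FeasibleSingle (α Sbar : ℝ) (k N : ℕ) (E : ℕ → ℝ) (σ : ℝ)
    (w c d s : ℕ → ℝ) : Prop :=
  s k = σ ∧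
  (∀ t ∈ Finset.Icc k N,
    0 ≤ w t ∧ 0 ≤ c t ∧ 0 ≤ d t ∧
      s (t + 1) = s t + α * c t - d t ∧ d t ≤ s t ∧
      0 ≤ E t + w t - c t + α * d t) ∧
  (∀ t ∈ Finset.Icc k (N + 1), 0 ≤ s t ∧ s t ≤ Sbar)

/-- Optimal cost of the single-base-station problem. -/
noncomputable def JstarSingle (α Sbar : ℝ) (k N : ℕ) (E : ℕ → ℝ) (σ : ℝ) : ℝ :=
  sInf {r : ℝ | ∃ w c d s : ℕ → ℝ, FeasibleSingle α Sbar k N E σ w c d s ∧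
    (∑ t ∈ Finset.Icc k N, w t) = r}

/-- with lossless transfer (`β = 1`) the two-BS problem reduces to a
single BS with combined profile `E₁ + E₂`, capacity `2·Smax`, initial storage `σ₁+σ₂`. -/
theorem beta_one_reduces_to_single_BS
    (α Smax : ℝ) (hα : 0 ≤ α ∧ α ≤ 1) (hS : 0 < Smax)
    (k N : ℕ) (hkN : k ≤ N) (E₁ E₂ : ℕ → ℝ)
    (σ₁ σ₂ : ℝ) (hσ₁ : 0 ≤ σ₁ ∧ σ₁ ≤ Smax) (hσ₂ : 0 ≤ σ₂ ∧ σ₂ ≤ Smax) :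
    Jstar α 1 Smax k N E₁ E₂ σ₁ σ₂ =
      JstarSingle α (2 * Smax) k N (fun t => E₁ t + E₂ t) (σ₁ + σ₂) := by
  obtain ⟨hα0, hα1⟩ := hα
  obtain ⟨g, hginit, hgrange, hgmono⟩ :=
    split_fun_exists Smax σ₁ σ₂ hS hσ₁.1 hσ₁.2 hσ₂.1 hσ₂.2
  unfold Jstar JstarSingle
  congr 1
  ext r
  simp only [Set.mem_setOf_eq]
  constructor
  · rintro ⟨w₁, w₂, c₁, c₂, d₁, d₂, x₁₂, x₂₁, s₁, s₂, ⟨hk1, hk2, hstep, hbox⟩, hsum⟩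
    refine ⟨fun t => w₁ t + w₂ t, fun t => c₁ t + c₂ t, fun t => d₁ t + d₂ t,
      fun t => s₁ t + s₂ t, ⟨by simp [hk1, hk2], ?_, ?_⟩, hsum⟩
    · intro t ht
      obtain ⟨hw1, hw2, hc1, hc2, hd1, hd2, hx1, hx2, hs1, hs2, hds1, hds2, hE1, hE2⟩ :=
        hstep t ht
      dsimp only
      refine ⟨by linarith, by linarith, by linarith, ?_, by linarith, ?_⟩
      · rw [hs1, hs2]; ring
      · have e : α * (d₁ t + d₂ t) = α * d₁ t + α * d₂ t := by ring
        linarith [e]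
    · intro t ht
      obtain ⟨ha, hb, hc, hd⟩ := hbox t ht
      dsimp only
      exact ⟨by linarith, by linarith⟩
  · rintro ⟨w, c, d, s, ⟨hk, hstep, hbox⟩, hsum⟩
    refine ⟨w, fun _ => 0,
      fun t => max 0 (g (s (t+1)) - g (s t)) / α,
      fun t => max 0 ((s (t+1) - g (s (t+1))) - (s t - g (s t))) / α,
      fun t => max 0 (g (s t) - g (s (t+1))),
      fun t => max 0 ((s t - g (s t)) - (s (t+1) - g (s (t+1)))),
      fun t => max 0 (-(E₂ t + 0 - max 0 ((s (t+1) - g (s (t+1))) - (s t - g (s t))) / α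
        + α * max 0 ((s t - g (s t)) - (s (t+1) - g (s (t+1)))))),
      fun t => max 0 (-(E₁ t + w t - max 0 (g (s (t+1)) - g (s t)) / α
        + α * max 0 (g (s t) - g (s (t+1))))),
      fun t => g (s t), fun t => s t - g (s t), ⟨?_, ?_, ?_, ?_⟩, ?_⟩
    · simp only [hk, hginit]
    · simp only [hk, hginit]
      ring
    · intro t ht
      have htm : t ∈ Finset.Icc k (N + 1) := by
        simp only [Finset.mem_Icc] at ht ⊢; omega
      have htm1 : t + 1 ∈ Finset.Icc k (N + 1) := by
        simp only [Finset.mem_Icc] at ht ⊢; omega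
      obtain ⟨hw, hc, hd, htr, hds, hE⟩ := hstep t ht
      dsimp only at hE
      obtain ⟨hs0, hs2⟩ := hbox t htm
      obtain ⟨hs0', hs2'⟩ := hbox (t + 1) htm1
      obtain ⟨hG0, hGM, hH0, hHM⟩ := hgrange (s t) hs0 hs2
      obtain ⟨hG0', hGM', hH0', hHM'⟩ := hgrange (s (t + 1)) hs0' hs2'
      have hzle : α = 0 → s (t + 1) ≤ s t := by
        intro h
        rw [htr, h]
        simp
        linarith
      have tid1 : α * (max 0 (g (s (t+1)) - g (s t)) / α) - max 0 (g (s t) - g (s (t+1)))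
          = g (s (t+1)) - g (s t) :=
        storage_split_step α (g (s t)) (g (s (t+1))) (fun h => (hgmono _ _ (hzle h)).1)
      have tid2 : α * (max 0 ((s (t+1) - g (s (t+1))) - (s t - g (s t))) / α)
            - max 0 ((s t - g (s t)) - (s (t+1) - g (s (t+1))))
          = (s (t+1) - g (s (t+1))) - (s t - g (s t)) :=
        storage_split_step α (s t - g (s t)) (s (t+1) - g (s (t+1)))
          (fun h => (hgmono _ _ (hzle h)).2)
      have hcost : max 0 (g (s (t+1)) - g (s t)) / α
            + max 0 ((s (t+1) - g (s (t+1))) - (s t - g (s t))) / α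
            - α * (max 0 (-(g (s (t+1)) - g (s t)))
              + max 0 (-((s (t+1) - g (s (t+1))) - (s t - g (s t)))))
          ≤ c t - α * d t := by
        apply cost_bound α (c t) (d t) _ _ hα0 hα1 hc hd
        · rw [htr]; ring
        · rcases le_total (s t) (s (t+1)) with h | h
          · obtain ⟨m1, m2⟩ := hgmono _ _ h
            exact Or.inl ⟨by linarith, by linarith⟩
          · obtain ⟨m1, m2⟩ := hgmono _ _ h
            exact Or.inr ⟨by linarith, by linarith⟩
      have hnegG : max 0 (-(g (s (t+1)) - g (s t))) = max 0 (g (s t) - g (s (t+1))) := by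
        ring_nf
      have hnegH : max 0 (-((s (t+1) - g (s (t+1))) - (s t - g (s t))))
          = max 0 ((s t - g (s t)) - (s (t+1) - g (s (t+1)))) := by
        ring_nf
      rw [hnegG, hnegH] at hcost
      have hAB : 0 ≤ (E₁ t + w t - max 0 (g (s (t+1)) - g (s t)) / α
            + α * max 0 (g (s t) - g (s (t+1))))
          + (E₂ t + 0 - max 0 ((s (t+1) - g (s (t+1))) - (s t - g (s t))) / α
            + α * max 0 ((s t - g (s t)) - (s (t+1) - g (s (t+1))))) := by
        have : α * (max 0 (g (s t) - g (s (t+1)))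
            + max 0 ((s t - g (s t)) - (s (t+1) - g (s (t+1)))))
          = α * max 0 (g (s t) - g (s (t+1)))
            + α * max 0 ((s t - g (s t)) - (s (t+1) - g (s (t+1)))) := by ring
        linarith [hcost, hE, this]
      obtain ⟨hbal1, hbal2⟩ := transfer_bal _ _ hAB
      dsimp only
      refine ⟨hw, le_refl 0, div_nonneg (le_max_left _ _) hα0,
        div_nonneg (le_max_left _ _) hα0, le_max_left _ _, le_max_left _ _,
        le_max_left _ _, le_max_left _ _, by linarith [tid1],
        by linarith [tid2], ?_, ?_, ?_, ?_⟩
      · exact max_le hG0 (by linarith)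
      · exact max_le hH0 (by linarith)
      · linarith [hbal1]
      · linarith [hbal2]
    · intro t ht
      have h0 : 0 ≤ s t := (hbox t ht).1
      have h2 : s t ≤ 2 * Smax := (hbox t ht).2
      obtain ⟨a, b, cc, dd⟩ := hgrange (s t) h0 h2
      exact ⟨a, b, cc, dd⟩
    · simpa using hsum
end

section
/- (Monotonicity bound on the optimal cost-to-go.) Suppose (σ₁,σ₂), (σ₁',σ₂') ∈ [0,S_max]² with σ₁ ≤ σ₁' and σ₂ ≤ σ₂'. Then J*_k(σ₁,σ₂) ≤ J*_k(σ₁',σ₂') + α·((σ₁'−σ₁) + (σ₂'−σ₂)). -/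
/-! ### Auxiliary machinery -/

/-- Deficit process: starts at `Δ` at time `k`, and from time `k` on decreases by
`min (deficit) (d t)` at each step. -/
noncomputable def dfc (k : ℕ) (Δ : ℝ) (d : ℕ → ℝ) : ℕ → ℝ
  | 0 => Δ
  | (n+1) => if k ≤ n then max 0 (dfc k Δ d n - d n) else Δ

lemma dfc_at_k (k : ℕ) (Δ : ℝ) (d : ℕ → ℝ) : dfc k Δ d k = Δ := by
  cases k with
  | zero => rfl
  | succ m => simp [dfc]

lemma dfc_step (k : ℕ) (Δ : ℝ) (d : ℕ → ℝ) {t : ℕ} (h : k ≤ t) :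
    dfc k Δ d (t + 1) = max 0 (dfc k Δ d t - d t) := by
  simp [dfc, h]

lemma dfc_nonneg (k : ℕ) {Δ : ℝ} (hΔ : 0 ≤ Δ) (d : ℕ → ℝ) (t : ℕ) :
    0 ≤ dfc k Δ d t := by
  induction t with
  | zero => exact hΔ
  | succ n ih =>
      by_cases h : k ≤ n
      · rw [dfc_step k Δ d h]; exact le_max_left _ _
      · simp [dfc, h, hΔ]

lemma sub_min_eq_max (a b : ℝ) : a - min a b = max 0 (a - b) := by
  rcases le_total a b with h | h
  · rw [min_eq_left h, max_eq_left (by linarith)]; ring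
  · rw [min_eq_right h, max_eq_right (by linarith)]

lemma sum_sub_telescope (f : ℕ → ℝ) {k N : ℕ} (h : k ≤ N) :
    ∑ t ∈ Finset.Icc k N, (f t - f (t + 1)) = f k - f (N + 1) := by
  induction N, h using Nat.le_induction with
  | base => simp
  | succ n hn ih =>
      rw [Finset.sum_Icc_succ_top (hn.trans (Nat.le_succ n)), ih]
      ring

/-- Every cost in the feasible-cost set is nonnegative. -/
lemma cost_nonneg (α β Smax : ℝ) (k N : ℕ) (E₁ E₂ : ℕ → ℝ) (σ₁ σ₂ : ℝ) :
    ∀ r ∈ {r : ℝ | ∃ w₁ w₂ c₁ c₂ d₁ d₂ x₁₂ x₂₁ s₁ s₂ : ℕ → ℝ,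
      Feasible α β Smax k N E₁ E₂ σ₁ σ₂ w₁ w₂ c₁ c₂ d₁ d₂ x₁₂ x₂₁ s₁ s₂ ∧
      (∑ t ∈ Finset.Icc k N, (w₁ t + w₂ t)) = r}, 0 ≤ r := by
  rintro r ⟨w₁, w₂, c₁, c₂, d₁, d₂, x₁₂, x₂₁, s₁, s₂, ⟨_, _, hslot, _⟩, hsum⟩
  rw [← hsum]
  refine Finset.sum_nonneg fun t ht => ?_
  obtain ⟨hw₁, hw₂, -⟩ := hslot t ht
  linarith

/-- The trivial feasible policy (constant storage, grid covers all deficits). -/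
lemma feasible_nonempty (α β Smax : ℝ) (hα : 0 ≤ α) (k N : ℕ) (E₁ E₂ : ℕ → ℝ)
    {σ₁ σ₂ : ℝ} (hσ₁ : 0 ≤ σ₁ ∧ σ₁ ≤ Smax) (hσ₂ : 0 ≤ σ₂ ∧ σ₂ ≤ Smax) :
    {r : ℝ | ∃ w₁ w₂ c₁ c₂ d₁ d₂ x₁₂ x₂₁ s₁ s₂ : ℕ → ℝ,
      Feasible α β Smax k N E₁ E₂ σ₁ σ₂ w₁ w₂ c₁ c₂ d₁ d₂ x₁₂ x₂₁ s₁ s₂ ∧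
      (∑ t ∈ Finset.Icc k N, (w₁ t + w₂ t)) = r}.Nonempty := by
  refine ⟨∑ t ∈ Finset.Icc k N, ((fun t => max 0 (-E₁ t)) t + (fun t => max 0 (-E₂ t)) t),
    (fun t => max 0 (-E₁ t)), (fun t => max 0 (-E₂ t)), 0, 0, 0, 0, 0, 0,
    (fun _ => σ₁), (fun _ => σ₂), ?_, rfl⟩
  refine ⟨rfl, rfl, fun t _ => ?_, fun t _ => ⟨hσ₁.1, hσ₁.2, hσ₂.1, hσ₂.2⟩⟩
  simp only [Pi.zero_apply]
  refine ⟨le_max_left _ _, le_max_left _ _, le_rfl, le_rfl, le_rfl, le_rfl, le_rfl, le_rfl,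
    by ring, by ring, hσ₁.1, hσ₂.1, ?_, ?_⟩
  · simp only [mul_zero]; linarith [le_max_right 0 (-E₁ t)]
  · simp only [mul_zero]; linarith [le_max_right 0 (-E₂ t)]

/-- Proposition 2: monotonicity bound on the optimal cost-to-go. -/
theorem cost_to_go_monotonicity_bound
    (α β Smax : ℝ) (hα : 0 ≤ α ∧ α ≤ 1) (hβ : 0 ≤ β ∧ β ≤ 1) (hS : 0 < Smax)
    (k N : ℕ) (hkN : k ≤ N) (E₁ E₂ : ℕ → ℝ)
    (σ₁ σ₂ σ₁' σ₂' : ℝ)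
    (hσ₁ : 0 ≤ σ₁ ∧ σ₁ ≤ Smax) (hσ₂ : 0 ≤ σ₂ ∧ σ₂ ≤ Smax)
    (hσ₁' : 0 ≤ σ₁' ∧ σ₁' ≤ Smax) (hσ₂' : 0 ≤ σ₂' ∧ σ₂' ≤ Smax)
    (h₁ : σ₁ ≤ σ₁') (h₂ : σ₂ ≤ σ₂') :
    Jstar α β Smax k N E₁ E₂ σ₁ σ₂ ≤
      Jstar α β Smax k N E₁ E₂ σ₁' σ₂' + α * ((σ₁' - σ₁) + (σ₂' - σ₂)) := by
  set S := {r : ℝ | ∃ w₁ w₂ c₁ c₂ d₁ d₂ x₁₂ x₂₁ s₁ s₂ : ℕ → ℝ,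
      Feasible α β Smax k N E₁ E₂ σ₁ σ₂ w₁ w₂ c₁ c₂ d₁ d₂ x₁₂ x₂₁ s₁ s₂ ∧
      (∑ t ∈ Finset.Icc k N, (w₁ t + w₂ t)) = r} with hSdef
  set S' := {r : ℝ | ∃ w₁ w₂ c₁ c₂ d₁ d₂ x₁₂ x₂₁ s₁ s₂ : ℕ → ℝ,
      Feasible α β Smax k N E₁ E₂ σ₁' σ₂' w₁ w₂ c₁ c₂ d₁ d₂ x₁₂ x₂₁ s₁ s₂ ∧
      (∑ t ∈ Finset.Icc k N, (w₁ t + w₂ t)) = r} with hS'def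
  have hbdd : BddBelow S := ⟨0, fun r hr => cost_nonneg α β Smax k N E₁ E₂ σ₁ σ₂ r hr⟩
  have hne' : S'.Nonempty := feasible_nonempty α β Smax hα.1 k N E₁ E₂ hσ₁' hσ₂'
  -- Key step: for every r ∈ S', Jstar σ ≤ r + α·Δ
  have key : ∀ r ∈ S', Jstar α β Smax k N E₁ E₂ σ₁ σ₂ ≤ r + α * ((σ₁' - σ₁) + (σ₂' - σ₂)) := by
    rintro r ⟨w₁, w₂, c₁, c₂, d₁, d₂, x₁₂, x₂₁, s₁, s₂, ⟨hs1k, hs2k, hslot, hstate⟩, hsum⟩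
    set δ₁ := dfc k (σ₁' - σ₁) d₁ with hδ₁def
    set δ₂ := dfc k (σ₂' - σ₂) d₂ with hδ₂def
    have hΔ₁ : (0:ℝ) ≤ σ₁' - σ₁ := by linarith
    have hΔ₂ : (0:ℝ) ≤ σ₂' - σ₂ := by linarith
    have hδ₁nn : ∀ t, 0 ≤ δ₁ t := dfc_nonneg k hΔ₁ d₁
    have hδ₂nn : ∀ t, 0 ≤ δ₂ t := dfc_nonneg k hΔ₂ d₂
    -- The deficit never exceeds the storage level
    have hdel : ∀ t, k ≤ t → t ≤ N + 1 → δ₁ t ≤ s₁ t ∧ δ₂ t ≤ s₂ t := by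
      intro t ht
      induction t, ht using Nat.le_induction with
      | base =>
          intro _
          rw [hδ₁def, hδ₂def, dfc_at_k, dfc_at_k, hs1k, hs2k]
          exact ⟨by linarith, by linarith⟩
      | succ n hn ih =>
          intro hle
          have hnN : n ≤ N := by omega
          obtain ⟨ih1, ih2⟩ := ih (by omega)
          obtain ⟨hw₁, hw₂, hc₁, hc₂, hd₁, hd₂, hx₁, hx₂, hs₁e, hs₂e, hd₁le, hd₂le, hE₁, hE₂⟩ :=
            hslot n (Finset.mem_Icc.mpr ⟨hn, hnN⟩)
          obtain ⟨hs₁n, _, hs₂n, _⟩ :=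
            hstate (n + 1) (Finset.mem_Icc.mpr ⟨by omega, by omega⟩)
          have hαc₁ : 0 ≤ α * c₁ n := mul_nonneg hα.1 hc₁
          have hαc₂ : 0 ≤ α * c₂ n := mul_nonneg hα.1 hc₂
          constructor
          · rw [hδ₁def, dfc_step k _ d₁ hn]
            exact max_le hs₁n (by rw [← hδ₁def]; linarith)
          · rw [hδ₂def, dfc_step k _ d₂ hn]
            exact max_le hs₂n (by rw [← hδ₂def]; linarith)
    -- step identity: min (δ t) (d t) = δ t - δ (t+1)
    have hstep₁ : ∀ t, k ≤ t → min (δ₁ t) (d₁ t) = δ₁ t - δ₁ (t + 1) := by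
      intro t ht
      rw [hδ₁def, dfc_step k _ d₁ ht, ← hδ₁def, ← sub_min_eq_max]; ring
    have hstep₂ : ∀ t, k ≤ t → min (δ₂ t) (d₂ t) = δ₂ t - δ₂ (t + 1) := by
      intro t ht
      rw [hδ₂def, dfc_step k _ d₂ ht, ← hδ₂def, ← sub_min_eq_max]; ring
    -- the modified policy
    set w₁' : ℕ → ℝ := fun t => w₁ t + α * min (δ₁ t) (d₁ t) with hw₁'def
    set w₂' : ℕ → ℝ := fun t => w₂ t + α * min (δ₂ t) (d₂ t) with hw₂'def
    set d₁' : ℕ → ℝ := fun t => d₁ t - min (δ₁ t) (d₁ t) with hd₁'def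
    set d₂' : ℕ → ℝ := fun t => d₂ t - min (δ₂ t) (d₂ t) with hd₂'def
    set s₁' : ℕ → ℝ := fun t => s₁ t - δ₁ t with hs₁'def
    set s₂' : ℕ → ℝ := fun t => s₂ t - δ₂ t with hs₂'def
    have hfeas : Feasible α β Smax k N E₁ E₂ σ₁ σ₂ w₁' w₂' c₁ c₂ d₁' d₂' x₁₂ x₂₁ s₁' s₂' := by
      refine ⟨?_, ?_, ?_, ?_⟩
      · simp only [hs₁'def, hδ₁def, dfc_at_k, hs1k]; ring
      · simp only [hs₂'def, hδ₂def, dfc_at_k, hs2k]; ring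
      · intro t ht
        obtain ⟨htk, htN⟩ := Finset.mem_Icc.mp ht
        obtain ⟨hw₁, hw₂, hc₁, hc₂, hd₁, hd₂, hx₁, hx₂, hs₁e, hs₂e, hd₁le, hd₂le, hE₁, hE₂⟩ :=
          hslot t ht
        obtain ⟨hδs₁, hδs₂⟩ := hdel t htk (by omega)
        have hmin₁nn : 0 ≤ min (δ₁ t) (d₁ t) := le_min (hδ₁nn t) hd₁
        have hmin₂nn : 0 ≤ min (δ₂ t) (d₂ t) := le_min (hδ₂nn t) hd₂
        have hmin₁le : min (δ₁ t) (d₁ t) ≤ d₁ t := min_le_right _ _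
        have hmin₂le : min (δ₂ t) (d₂ t) ≤ d₂ t := min_le_right _ _
        refine ⟨?_, ?_, hc₁, hc₂, ?_, ?_, hx₁, hx₂, ?_, ?_, ?_, ?_, ?_, ?_⟩
        · exact add_nonneg hw₁ (mul_nonneg hα.1 hmin₁nn)
        · exact add_nonneg hw₂ (mul_nonneg hα.1 hmin₂nn)
        · simp only [hd₁'def]; linarith
        · simp only [hd₂'def]; linarith
        · simp only [hs₁'def, hd₁'def, hs₁e, hstep₁ t htk]; ring
        · simp only [hs₂'def, hd₂'def, hs₂e, hstep₂ t htk]; ring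
        · -- d₁' ≤ s₁'
          simp only [hd₁'def, hs₁'def]
          rcases le_total (δ₁ t) (d₁ t) with h | h
          · rw [min_eq_left h]; linarith
          · rw [min_eq_right h]; linarith
        · simp only [hd₂'def, hs₂'def]
          rcases le_total (δ₂ t) (d₂ t) with h | h
          · rw [min_eq_left h]; linarith
          · rw [min_eq_right h]; linarith
        · simp only [hw₁'def, hd₁'def, mul_sub]; linarith
        · simp only [hw₂'def, hd₂'def, mul_sub]; linarith
      · intro t ht
        obtain ⟨htk, htN1⟩ := Finset.mem_Icc.mp ht
        obtain ⟨h1, h2, h3, h4⟩ := hstate t ht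
        obtain ⟨hδs₁, hδs₂⟩ := hdel t htk htN1
        simp only [hs₁'def, hs₂'def]
        exact ⟨by linarith, by linarith [hδ₁nn t], by linarith, by linarith [hδ₂nn t]⟩
    have hcost : (∑ t ∈ Finset.Icc k N, (w₁' t + w₂' t)) =
        r + α * ((δ₁ k - δ₁ (N + 1)) + (δ₂ k - δ₂ (N + 1))) := by
      have : ∀ t ∈ Finset.Icc k N, w₁' t + w₂' t =
          (w₁ t + w₂ t) + α * ((δ₁ t - δ₁ (t + 1)) + (δ₂ t - δ₂ (t + 1))) := by
        intro t ht
        obtain ⟨htk, _⟩ := Finset.mem_Icc.mp ht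
        simp only [hw₁'def, hw₂'def, hstep₁ t htk, hstep₂ t htk]; ring
      rw [Finset.sum_congr rfl this, Finset.sum_add_distrib, hsum, ← Finset.mul_sum,
        Finset.sum_add_distrib, sum_sub_telescope δ₁ hkN, sum_sub_telescope δ₂ hkN]
    have hmem : (∑ t ∈ Finset.Icc k N, (w₁' t + w₂' t)) ∈ S :=
      ⟨w₁', w₂', c₁, c₂, d₁', d₂', x₁₂, x₂₁, s₁', s₂', hfeas, rfl⟩
    have hJle : Jstar α β Smax k N E₁ E₂ σ₁ σ₂ ≤ ∑ t ∈ Finset.Icc k N, (w₁' t + w₂' t) :=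
      csInf_le hbdd hmem
    have hδ₁k : δ₁ k = σ₁' - σ₁ := dfc_at_k k _ d₁
    have hδ₂k : δ₂ k = σ₂' - σ₂ := dfc_at_k k _ d₂
    have hb : (δ₁ k - δ₁ (N + 1)) + (δ₂ k - δ₂ (N + 1)) ≤ (σ₁' - σ₁) + (σ₂' - σ₂) := by
      rw [hδ₁k, hδ₂k]; linarith [hδ₁nn (N + 1), hδ₂nn (N + 1)]
    have := mul_le_mul_of_nonneg_left hb hα.1
    linarith [hcost ▸ hJle]
  have hlb : Jstar α β Smax k N E₁ E₂ σ₁ σ₂ - α * ((σ₁' - σ₁) + (σ₂' - σ₂)) ≤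
      Jstar α β Smax k N E₁ E₂ σ₁' σ₂' := by
    apply le_csInf hne'
    intro r hr
    linarith [key r hr]
  linarith
end

section
/- (Energy is never profitably drawn from the grid to increase storage.) For any Δ₁, Δ₂ ≥ 0 such that σ₁ + α·Δ₁ ≤ S_max and σ₂ + α·Δ₂ ≤ S_max, setting Δ_W = Δ₁ + Δ₂ one has J*_k(σ₁ + α·Δ₁, σ₂ + α·Δ₂) + Δ_W ≥ J*_k(σ₁, σ₂). -/
lemma station_facts (α σ Δ d : ℝ) (hα0 : 0 ≤ α) (hα1 : α ≤ 1) (hσ : 0 ≤ σ) (hΔ : 0 ≤ Δ)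
    (hd0 : 0 ≤ d) (hd : d ≤ σ + α * Δ) :
    0 ≤ min d σ ∧ min d σ ≤ σ ∧
    0 ≤ Δ - (d - min d σ) / α ∧
    0 ≤ Δ - (d - min d σ) / α + α * (d - min d σ) ∧
    Δ - (d - min d σ) / α + α * (d - min d σ) ≤ Δ ∧
    α * ((d - min d σ) / α) = d - min d σ := by
  set δ := d - min d σ with hδ
  have hδ0 : 0 ≤ δ := by simp [hδ]
  have hδle : δ ≤ α * Δ := by
    rcases le_total d σ with h | h
    · simp [hδ, min_eq_left h]
      positivity
    · simp [hδ, min_eq_right h]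
      linarith
  rcases eq_or_lt_of_le hα0 with h0 | h0
  · have : δ = 0 := by nlinarith
    simp [this, ← h0, le_min_iff, hd0, hσ, hΔ]
  · have hda : α * (δ / α) = δ := by field_simp
    have h1 : δ / α ≤ Δ := by
      rw [div_le_iff₀ h0]; nlinarith
    have h2 : α * δ ≤ δ / α := by
      rw [le_div_iff₀ h0]
      nlinarith [mul_nonneg (mul_nonneg hδ0 (sub_nonneg.2 hα1)) (by linarith : (0:ℝ) ≤ 1 + α)]
    refine ⟨le_min hd0 hσ, min_le_right _ _, by linarith, by nlinarith, by linarith, hda⟩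

/-- Corollary 1: energy is never profitably drawn from the grid to
increase storage. -/
theorem grid_energy_not_for_storage
    (α β Smax : ℝ) (hα : 0 ≤ α ∧ α ≤ 1) (hβ : 0 ≤ β ∧ β ≤ 1) (hS : 0 < Smax)
    (k N : ℕ) (hkN : k ≤ N) (E₁ E₂ : ℕ → ℝ)
    (σ₁ σ₂ : ℝ) (hσ₁ : 0 ≤ σ₁ ∧ σ₁ ≤ Smax) (hσ₂ : 0 ≤ σ₂ ∧ σ₂ ≤ Smax)
    (Δ₁ Δ₂ : ℝ) (hΔ₁ : 0 ≤ Δ₁) (hΔ₂ : 0 ≤ Δ₂)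
    (hcap₁ : σ₁ + α * Δ₁ ≤ Smax) (hcap₂ : σ₂ + α * Δ₂ ≤ Smax) :
    Jstar α β Smax k N E₁ E₂ σ₁ σ₂ ≤
      Jstar α β Smax k N E₁ E₂ (σ₁ + α * Δ₁) (σ₂ + α * Δ₂) + (Δ₁ + Δ₂) := by
  obtain ⟨hα0, hα1⟩ := hα
  obtain ⟨hσ₁0, hσ₁S⟩ := hσ₁
  obtain ⟨hσ₂0, hσ₂S⟩ := hσ₂
  set S₀ := {r : ℝ | ∃ w₁ w₂ c₁ c₂ d₁ d₂ x₁₂ x₂₁ s₁ s₂ : ℕ → ℝ,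
    Feasible α β Smax k N E₁ E₂ σ₁ σ₂ w₁ w₂ c₁ c₂ d₁ d₂ x₁₂ x₂₁ s₁ s₂ ∧
    (∑ t ∈ Finset.Icc k N, (w₁ t + w₂ t)) = r} with hS₀
  set S₁ := {r : ℝ | ∃ w₁ w₂ c₁ c₂ d₁ d₂ x₁₂ x₂₁ s₁ s₂ : ℕ → ℝ,
    Feasible α β Smax k N E₁ E₂ (σ₁ + α * Δ₁) (σ₂ + α * Δ₂) w₁ w₂ c₁ c₂ d₁ d₂ x₁₂ x₂₁ s₁ s₂ ∧
    (∑ t ∈ Finset.Icc k N, (w₁ t + w₂ t)) = r} with hS₁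
  -- S₀ is bounded below by 0
  have hbdd : BddBelow S₀ := by
    refine ⟨0, fun r hr => ?_⟩
    obtain ⟨w₁, w₂, c₁, c₂, d₁, d₂, x₁₂, x₂₁, s₁, s₂, hF, hsum⟩ := hr
    rw [← hsum]
    refine Finset.sum_nonneg fun t ht => ?_
    obtain ⟨h1, h2, _⟩ := hF.2.2.1 t ht
    linarith
  -- S₁ is nonempty: trivial policy
  have hne : S₁.Nonempty := by
    refine ⟨∑ t ∈ Finset.Icc k N, (max 0 (-E₁ t) + max 0 (-E₂ t)),
      fun t => max 0 (-E₁ t), fun t => max 0 (-E₂ t), 0, 0, 0, 0, 0, 0,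
      fun _ => σ₁ + α * Δ₁, fun _ => σ₂ + α * Δ₂, ?_, rfl⟩
    refine ⟨rfl, rfl, fun t ht => ?_, fun t ht => ?_⟩
    · refine ⟨le_max_left _ _, le_max_left _ _, le_rfl, le_rfl, le_rfl, le_rfl, le_rfl, le_rfl,
        by simp, by simp, by positivity, by positivity, ?_, ?_⟩
      · simp only [Pi.zero_apply]
        have := le_max_right 0 (-E₁ t); linarith [le_max_right (0:ℝ) (-E₁ t)]
      · simp only [Pi.zero_apply]
        linarith [le_max_right (0:ℝ) (-E₂ t)]
    · refine ⟨by positivity, hcap₁, by positivity, hcap₂⟩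
  -- Key step: each element of S₁ gives an element of S₀ costing at most Δ₁+Δ₂ more
  have hkey : ∀ r ∈ S₁, sInf S₀ ≤ r + (Δ₁ + Δ₂) := by
    intro r hr
    obtain ⟨w₁, w₂, c₁, c₂, d₁, d₂, x₁₂, x₂₁, s₁, s₂, hF, hsum⟩ := hr
    obtain ⟨hs1k, hs2k, hslot, hstate⟩ := hF
    have hk : k ∈ Finset.Icc k N := Finset.mem_Icc.2 ⟨le_rfl, hkN⟩
    obtain ⟨hw1, hw2, hc1, hc2, hd1, hd2, hx12, hx21, hr1, hr2, hds1, hds2, hb1, hb2⟩ :=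
      hslot k hk
    have hd1le : d₁ k ≤ σ₁ + α * Δ₁ := hs1k ▸ hds1
    have hd2le : d₂ k ≤ σ₂ + α * Δ₂ := hs2k ▸ hds2
    obtain ⟨hθ₁0, hθ₁σ, hp₁0, he₁0, he₁Δ, hda₁⟩ :=
      station_facts α σ₁ Δ₁ (d₁ k) hα0 hα1 hσ₁0 hΔ₁ hd1 hd1le
    obtain ⟨hθ₂0, hθ₂σ, hp₂0, he₂0, he₂Δ, hda₂⟩ :=
      station_facts α σ₂ Δ₂ (d₂ k) hα0 hα1 hσ₂0 hΔ₂ hd2 hd2le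
    set θ₁ := min (d₁ k) σ₁ with hθ₁def
    set θ₂ := min (d₂ k) σ₂ with hθ₂def
    set δ₁ := d₁ k - θ₁ with hδ₁def
    set δ₂ := d₂ k - θ₂ with hδ₂def
    set p₁ := Δ₁ - δ₁ / α with hp₁def
    set p₂ := Δ₂ - δ₂ / α with hp₂def
    set e₁ := p₁ + α * δ₁ with he₁def
    set e₂ := p₂ + α * δ₂ with he₂def
    -- modified policy
    set w₁' : ℕ → ℝ := fun t => w₁ t + if t = k then e₁ else 0 with hw₁'
    set w₂' : ℕ → ℝ := fun t => w₂ t + if t = k then e₂ else 0 with hw₂'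
    set c₁' : ℕ → ℝ := fun t => c₁ t + if t = k then p₁ else 0 with hc₁'
    set c₂' : ℕ → ℝ := fun t => c₂ t + if t = k then p₂ else 0 with hc₂'
    set d₁' : ℕ → ℝ := fun t => if t = k then θ₁ else d₁ t with hd₁'
    set d₂' : ℕ → ℝ := fun t => if t = k then θ₂ else d₂ t with hd₂'
    set s₁' : ℕ → ℝ := fun t => if t = k then σ₁ else s₁ t with hs₁'
    set s₂' : ℕ → ℝ := fun t => if t = k then σ₂ else s₂ t with hs₂'
    have hsucc : ∀ t : ℕ, k ≤ t → t + 1 ≠ k := fun t ht => by omega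
    have hFeas : Feasible α β Smax k N E₁ E₂ σ₁ σ₂ w₁' w₂' c₁' c₂' d₁' d₂' x₁₂ x₂₁ s₁' s₂' := by
      refine ⟨by simp [hs₁'], by simp [hs₂'], fun t ht => ?_, fun t ht => ?_⟩
      · have htk : k ≤ t := (Finset.mem_Icc.1 ht).1
        by_cases h : t = k
        · subst h
          simp only [hw₁', hw₂', hc₁', hc₂', hd₁', hd₂', hs₁', hs₂', if_pos rfl,
            eq_self_iff_true, if_true, if_neg (hsucc t htk)]
          have hrec₁ : s₁ (t + 1) = σ₁ + α * Δ₁ + α * c₁ t - d₁ t := by rw [hr1, hs1k]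
          have hrec₂ : s₂ (t + 1) = σ₂ + α * Δ₂ + α * c₂ t - d₂ t := by rw [hr2, hs2k]
          have hmul₁ : α * p₁ = α * Δ₁ - δ₁ := by
            rw [hp₁def, mul_sub, hda₁]
          have hmul₂ : α * p₂ = α * Δ₂ - δ₂ := by
            rw [hp₂def, mul_sub, hda₂]
          refine ⟨by linarith, by linarith, by linarith, by linarith, hθ₁0, hθ₂0, hx12, hx21,
            ?_, ?_, hθ₁σ, hθ₂σ, ?_, ?_⟩
          · rw [hrec₁]; rw [mul_add, hmul₁]; ring_nf; linarith [hδ₁def]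
          · rw [hrec₂]; rw [mul_add, hmul₂]; ring_nf; linarith [hδ₂def]
          · have hθd₁ : α * θ₁ = α * d₁ t - α * δ₁ := by rw [hδ₁def]; ring
            have he : e₁ = p₁ + α * δ₁ := he₁def
            linarith [hb1]
          · have hθd₂ : α * θ₂ = α * d₂ t - α * δ₂ := by rw [hδ₂def]; ring
            linarith [hb2]
        · have h1 : t + 1 ≠ k := hsucc t htk
          simp only [hw₁', hw₂', hc₁', hc₂', hd₁', hd₂', hs₁', hs₂', if_neg h, if_neg h1,
            add_zero]
          exact hslot t ht
      · by_cases h : t = k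
        · subst h; simp only [hs₁', hs₂', if_pos rfl]
          exact ⟨hσ₁0, hσ₁S, hσ₂0, hσ₂S⟩
        · simp only [hs₁', hs₂', if_neg h]
          exact hstate t ht
    have hmem : (∑ t ∈ Finset.Icc k N, (w₁' t + w₂' t)) ∈ S₀ := by
      exact ⟨w₁', w₂', c₁', c₂', d₁', d₂', x₁₂, x₂₁, s₁', s₂', hFeas, rfl⟩
    have hcost : (∑ t ∈ Finset.Icc k N, (w₁' t + w₂' t)) = r + (e₁ + e₂) := by
      have : ∀ t, w₁' t + w₂' t = (w₁ t + w₂ t) + (if t = k then e₁ + e₂ else 0) := by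
        intro t
        simp only [hw₁', hw₂']
        by_cases h : t = k <;> simp [h] <;> ring
      simp only [this, Finset.sum_add_distrib, hsum]
      rw [Finset.sum_ite_eq' (Finset.Icc k N) k (fun _ => e₁ + e₂), if_pos hk]
    calc sInf S₀ ≤ ∑ t ∈ Finset.Icc k N, (w₁' t + w₂' t) := csInf_le hbdd hmem
      _ = r + (e₁ + e₂) := hcost
      _ ≤ r + (Δ₁ + Δ₂) := by linarith
  have hlb : sInf S₀ - (Δ₁ + Δ₂) ≤ sInf S₁ :=
    le_csInf hne fun r hr => by linarith [hkey r hr]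
  show sInf S₀ ≤ sInf S₁ + (Δ₁ + Δ₂)
  linarith
end

section
/- (It is optimal to store excess energy locally rather than transfer it to the other base station's storage.) Suppose Δ ≥ 0 with σ₁ + α·Δ ≤ S_max and σ₂ + α·β·Δ ≤ S_max. Then J*_k(σ₁ + α·Δ, σ₂) ≤ J*_k(σ₁, σ₂ + α·β·Δ). -/
set_option maxHeartbeats 2000000 in
private lemma store_locally_better_aux
    (α β Smax : ℝ) (hα : 0 ≤ α ∧ α ≤ 1) (hβ : 0 ≤ β ∧ β ≤ 1) (hS : 0 < Smax)
    (k N : ℕ) (hkN : k ≤ N) (E₁ E₂ : ℕ → ℝ)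
    (σ₁ σ₂ : ℝ) (hσ₁ : 0 ≤ σ₁ ∧ σ₁ ≤ Smax) (hσ₂ : 0 ≤ σ₂ ∧ σ₂ ≤ Smax)
    (Δ : ℝ) (hΔ : 0 ≤ Δ)
    (hcap₁ : σ₁ + α * Δ ≤ Smax) (hcap₂ : σ₂ + α * β * Δ ≤ Smax) :
    Jstar α β Smax k N E₁ E₂ (σ₁ + α * Δ) σ₂ ≤
      Jstar α β Smax k N E₁ E₂ σ₁ (σ₂ + α * β * Δ) := by
  obtain ⟨hα0, hα1⟩ := hα
  obtain ⟨hβ0, hβ1⟩ := hβ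
  have hbdd : BddBelow {r : ℝ | ∃ w₁ w₂ c₁ c₂ d₁ d₂ x₁₂ x₂₁ s₁ s₂ : ℕ → ℝ,
      Feasible α β Smax k N E₁ E₂ (σ₁ + α * Δ) σ₂ w₁ w₂ c₁ c₂ d₁ d₂ x₁₂ x₂₁ s₁ s₂ ∧
      (∑ t ∈ Finset.Icc k N, (w₁ t + w₂ t)) = r} := by
    refine ⟨0, ?_⟩
    rintro r ⟨w₁, w₂, c₁, c₂, d₁, d₂, x₁₂, x₂₁, s₁, s₂, ⟨_, _, hstep, _⟩, rfl⟩
    exact Finset.sum_nonneg fun t ht => add_nonneg (hstep t ht).1 (hstep t ht).2.1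
  rw [Jstar, Jstar]
  apply le_csInf
  · -- RHS set is nonempty (trivial policy)
    refine ⟨∑ t ∈ Finset.Icc k N, (max 0 (-E₁ t) + max 0 (-E₂ t)),
      fun t => max 0 (-E₁ t), fun t => max 0 (-E₂ t), 0, 0, 0, 0, 0, 0,
      fun _ => σ₁, fun _ => σ₂ + α * β * Δ, ⟨rfl, rfl, ?_, ?_⟩, rfl⟩
    · intro t _
      have h1 := le_max_right (0:ℝ) (-E₁ t)
      have h2 := le_max_right (0:ℝ) (-E₂ t)
      have hab : 0 ≤ α * β * Δ := mul_nonneg (mul_nonneg hα0 hβ0) hΔ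
      refine ⟨le_max_left _ _, le_max_left _ _, le_rfl, le_rfl, le_rfl, le_rfl,
        le_rfl, le_rfl, by simp, by simp, by simp [hσ₁.1], ?_, ?_, ?_⟩
      · simp only [Pi.zero_apply]; linarith [hσ₂.1]
      · simp only [Pi.zero_apply]; linarith
      · simp only [Pi.zero_apply]; linarith
    · intro t _
      have hab : 0 ≤ α * β * Δ := mul_nonneg (mul_nonneg hα0 hβ0) hΔ
      exact ⟨hσ₁.1, hσ₁.2, by simp; linarith [hσ₂.1], by simp; linarith [hcap₂]⟩
  -- main part
  rintro r ⟨w₁, w₂, c₁, c₂, d₁, d₂, x₁₂, x₂₁, s₁, s₂, ⟨hs1k, hs2k, hstep, hbound⟩, rfl⟩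
  apply csInf_le hbdd
  -- the tracked extra amount stored at station 1
  obtain ⟨a, hak, harec0⟩ : ∃ a : ℕ → ℝ, a k = α * Δ ∧ ∀ t, k ≤ t →
      a (t + 1) = (a t - max 0 (d₂ t - (s₂ t - β * a t)) / β) -
        α * (max 0 (s₁ (t + 1) +
          (a t - max 0 (d₂ t - (s₂ t - β * a t)) / β) - Smax) / α) := by
    refine ⟨fun t => Nat.rec (α * Δ)
      (fun n x =>
        (x - max 0 (d₂ (k + n) - (s₂ (k + n) - β * x)) / β) -
          α * (max 0 (s₁ (k + n + 1) +
            (x - max 0 (d₂ (k + n) - (s₂ (k + n) - β * x)) / β) - Smax) / α)) (t - k),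
      by simp, ?_⟩
    intro t ht
    obtain ⟨m, rfl⟩ : ∃ m, t = k + m := ⟨t - k, by omega⟩
    simp only [show k + m + 1 - k = m + 1 by omega, Nat.add_sub_cancel_left]
  set y : ℕ → ℝ := fun t => max 0 (d₂ t - (s₂ t - β * a t)) with hy
  set z : ℕ → ℝ := fun t => y t / β with hz
  set u : ℕ → ℝ := fun t => max 0 (s₁ (t + 1) + (a t - z t) - Smax) / α with hu
  have harec : ∀ t, k ≤ t → a (t + 1) = (a t - z t) - α * u t := by
    intro t ht
    rw [harec0 t ht]
  have key : ∀ t, k ≤ t → t ≤ N →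
      (0 ≤ a t ∧ β * a t ≤ s₂ t ∧ s₁ t + a t ≤ Smax) →
      ((0 ≤ a (t + 1) ∧ β * a (t + 1) ≤ s₂ (t + 1) ∧ s₁ (t + 1) + a (t + 1) ≤ Smax) ∧
       (0 ≤ z t ∧ z t ≤ a t ∧ β * z t = y t ∧ 0 ≤ u t ∧ u t ≤ c₁ t ∧ y t ≤ d₂ t ∧
        d₂ t - (s₂ t - β * a t) ≤ y t)) := by
    intro t htk htN hI
    obtain ⟨ha0, hbs2, hs1S⟩ := hI
    obtain ⟨hw1, hw2, hc1, hc2, hd1, hd2, hx12, hx21, hr1, hr2, hds1, hds2, he1, he2⟩ :=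
      hstep t (Finset.mem_Icc.mpr ⟨htk, htN⟩)
    obtain ⟨hs10, hs1M, hs20, hs2M⟩ :=
      hbound (t + 1) (Finset.mem_Icc.mpr ⟨by omega, by omega⟩)
    have hy0 : 0 ≤ y t := le_max_left _ _
    have hyβa : y t ≤ β * a t := max_le (mul_nonneg hβ0 ha0) (by linarith)
    have hyd : y t ≤ d₂ t := max_le hd2 (by linarith)
    have hylb : d₂ t - (s₂ t - β * a t) ≤ y t := le_max_right _ _
    have hz0 : 0 ≤ z t := div_nonneg hy0 hβ0
    have hβz : β * z t = y t := by
      rcases eq_or_lt_of_le hβ0 with h | h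
      · have hy00 : y t = 0 := le_antisymm (by rw [← h] at hyβa; simpa using hyβa) hy0
        simp [hz, hy00, ← h]
      · simp only [hz]; field_simp
    have hza : z t ≤ a t := by
      rcases eq_or_lt_of_le hβ0 with h | h
      · have hy00 : y t = 0 := le_antisymm (by rw [← h] at hyβa; simpa using hyβa) hy0
        simp only [hz]; rw [hy00]; simpa using ha0
      · simp only [hz]; rw [div_le_iff₀ h]; linarith [hyβa]
    have hex0 : 0 ≤ max 0 (s₁ (t + 1) + (a t - z t) - Smax) := le_max_left _ _
    have hexub : max 0 (s₁ (t + 1) + (a t - z t) - Smax) ≤ α * c₁ t := by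
      apply max_le (mul_nonneg hα0 hc1)
      rw [hr1]; linarith
    have hu0 : 0 ≤ u t := div_nonneg hex0 hα0
    have hαu : α * u t = max 0 (s₁ (t + 1) + (a t - z t) - Smax) := by
      rcases eq_or_lt_of_le hα0 with h | h
      · have h0 : max 0 (s₁ (t + 1) + (a t - z t) - Smax) = 0 :=
          le_antisymm (by rw [← h] at hexub; simpa using hexub) hex0
        simp only [hu]; rw [h0, ← h]; simp
      · simp only [hu]; field_simp
    have huc : u t ≤ c₁ t := by
      rcases eq_or_lt_of_le hα0 with h | h
      · have : u t = 0 := by simp only [hu]; rw [← h]; simp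
        rw [this]; exact hc1
      · simp only [hu]; rw [div_le_iff₀ h]
        calc max 0 (s₁ (t + 1) + (a t - z t) - Smax) ≤ α * c₁ t := hexub
          _ = c₁ t * α := by ring
    have harec' := harec t htk
    refine ⟨⟨?_, ?_, ?_⟩, hz0, hza, hβz, hu0, huc, hyd, hylb⟩
    · rw [harec', hαu]
      rcases le_or_gt (s₁ (t + 1) + (a t - z t) - Smax) 0 with h | h
      · rw [max_eq_left h]; linarith
      · rw [max_eq_right h.le]; linarith
    · rw [harec']
      have h1 : β * ((a t - z t) - α * u t) ≤ β * (a t - z t) :=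
        mul_le_mul_of_nonneg_left (by nlinarith [mul_nonneg hα0 hu0]) hβ0
      have h2 : β * (a t - z t) = β * a t - y t := by rw [mul_sub, hβz]
      have h3 : 0 ≤ α * c₂ t := mul_nonneg hα0 hc2
      rw [hr2]; linarith
    · rw [harec', hαu]
      have := le_max_right 0 (s₁ (t + 1) + (a t - z t) - Smax)
      linarith
  have hinv : ∀ t, k ≤ t → t ≤ N + 1 → (0 ≤ a t ∧ β * a t ≤ s₂ t ∧ s₁ t + a t ≤ Smax) := by
    intro t ht
    induction t, ht using Nat.le_induction with
    | base =>
      intro _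
      rw [hak, hs1k, hs2k]
      refine ⟨mul_nonneg hα0 hΔ, ?_, hcap₁⟩
      have : β * (α * Δ) = α * β * Δ := by ring
      rw [this]; linarith [hσ₂.1]
    | succ t ht ih =>
      intro h
      exact (key t ht (by omega) (ih (by omega))).1
  have hF : ∀ t, k ≤ t → t ≤ N →
      (0 ≤ z t ∧ z t ≤ a t ∧ β * z t = y t ∧ 0 ≤ u t ∧ u t ≤ c₁ t ∧ y t ≤ d₂ t ∧
        d₂ t - (s₂ t - β * a t) ≤ y t) :=
    fun t h1 h2 => (key t h1 h2 (hinv t h1 (by omega))).2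
  refine ⟨w₁, w₂, fun t => c₁ t - u t, fun t => c₂ t + β * u t, fun t => d₁ t + z t,
    fun t => d₂ t - y t, fun t => x₁₂ t + α * z t + u t, x₂₁,
    fun t => s₁ t + a t, fun t => s₂ t - β * a t, ⟨?_, ?_, ?_, ?_⟩, rfl⟩
  · show s₁ k + a k = σ₁ + α * Δ
    rw [hs1k, hak]
  · show s₂ k - β * a k = σ₂
    rw [hs2k, hak]; ring
  · intro t htmem
    dsimp only
    obtain ⟨htk, htN⟩ := Finset.mem_Icc.mp htmem
    obtain ⟨hw1, hw2, hc1, hc2, hd1, hd2, hx12, hx21, hr1, hr2, hds1, hds2, he1, he2⟩ :=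
      hstep t htmem
    obtain ⟨hz0, hza, hβz, hu0, huc, hyd, hylb⟩ := hF t htk htN
    have hαz : 0 ≤ α * z t := mul_nonneg hα0 hz0
    have hβu : 0 ≤ β * u t := mul_nonneg hβ0 hu0
    have hy0 : 0 ≤ y t := by rw [← hβz]; exact mul_nonneg hβ0 hz0
    refine ⟨hw1, hw2, by linarith, by linarith, by linarith, by linarith,
      by linarith, hx21, ?_, ?_, by linarith, by linarith, ?_, ?_⟩
    · rw [harec t htk, hr1]; ring
    · rw [harec t htk, hr2, ← hβz]; ring
    · have heq : E₁ t + w₁ t - (c₁ t - u t) + α * (d₁ t + z t) -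
          (x₁₂ t + α * z t + u t) + β * x₂₁ t =
          E₁ t + w₁ t - c₁ t + α * d₁ t - x₁₂ t + β * x₂₁ t := by ring
      rw [heq]; exact he1
    · have heq : E₂ t + w₂ t - (c₂ t + β * u t) + α * (d₂ t - β * z t) - x₂₁ t +
          β * (x₁₂ t + α * z t + u t) =
          E₂ t + w₂ t - c₂ t + α * d₂ t - x₂₁ t + β * x₁₂ t := by ring
      rw [← hβz, heq]; exact he2
  · intro t htmem
    dsimp only
    obtain ⟨htk, htN⟩ := Finset.mem_Icc.mp htmem
    obtain ⟨hs10, hs1M, hs20, hs2M⟩ := hbound t htmem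
    obtain ⟨ha0, hbs2, hs1S⟩ := hinv t htk htN
    have hβa : 0 ≤ β * a t := mul_nonneg hβ0 ha0
    exact ⟨by linarith, hs1S, by linarith, by linarith⟩

/-- Proposition 3, Case 1: storing excess energy locally is at least as
good as transferring it to the other base station's storage. -/
theorem store_locally_better
    (α β Smax : ℝ) (hα : 0 ≤ α ∧ α ≤ 1) (hβ : 0 ≤ β ∧ β ≤ 1) (hS : 0 < Smax)
    (k N : ℕ) (hkN : k ≤ N) (E₁ E₂ : ℕ → ℝ)
    (σ₁ σ₂ : ℝ) (hσ₁ : 0 ≤ σ₁ ∧ σ₁ ≤ Smax) (hσ₂ : 0 ≤ σ₂ ∧ σ₂ ≤ Smax)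
    (Δ : ℝ) (hΔ : 0 ≤ Δ)
    (hcap₁ : σ₁ + α * Δ ≤ Smax) (hcap₂ : σ₂ + α * β * Δ ≤ Smax) :
    Jstar α β Smax k N E₁ E₂ (σ₁ + α * Δ) σ₂ ≤
      Jstar α β Smax k N E₁ E₂ σ₁ (σ₂ + α * β * Δ) := by
  exact store_locally_better_aux α β Smax hα hβ hS k N hkN E₁ E₂ σ₁ σ₂ hσ₁ hσ₂ Δ hΔ hcap₁ hcap₂
end

section
/- (It is optimal to compensate a local deficit from local storage rather than from the other base station's storage.) Suppose 0 < α ≤ 1, 0 < β ≤ 1, and Δ ≥ 0 with Δ ≤ min{α·σ₁, α·β·σ₂}. Then J*_k(σ₁ − Δ/α, σ₂) ≤ J*_k(σ₁, σ₂ − Δ/(α·β)). -/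
/-- Auxiliary "debt" sequence: `Dfun n` is the deficit of the new storage 1 relative
to the old one at time `k + n`. -/
noncomputable def Dfun (α β Smax Δ : ℝ) (k : ℕ) (d₁ s₁ s₂ : ℕ → ℝ) : ℕ → ℝ
  | 0 => Δ / α
  | n + 1 =>
      min (Dfun α β Smax Δ k d₁ s₁ s₂ n
        - max 0 (d₁ (k + n) - (s₁ (k + n) - Dfun α β Smax Δ k d₁ s₁ s₂ n)))
      (β * (Smax - s₂ (k + n + 1)))

lemma min_eq_sub_max (a b : ℝ) : min a b = a - max 0 (a - b) := by
  rcases le_total a b with h | h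
  · rw [min_eq_left h, max_eq_left (by linarith)]; ring
  · rw [min_eq_right h, max_eq_right (by linarith)]; ring

/-- Proposition 3, Case 2: compensating a local deficit from local
storage is at least as good as using the other base station's storage. -/
theorem compensate_locally_better
    (α β Smax : ℝ) (hα : 0 < α ∧ α ≤ 1) (hβ : 0 < β ∧ β ≤ 1) (hS : 0 < Smax)
    (k N : ℕ) (hkN : k ≤ N) (E₁ E₂ : ℕ → ℝ)
    (σ₁ σ₂ : ℝ) (hσ₁ : 0 ≤ σ₁ ∧ σ₁ ≤ Smax) (hσ₂ : 0 ≤ σ₂ ∧ σ₂ ≤ Smax)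
    (Δ : ℝ) (hΔ : 0 ≤ Δ) (hΔle : Δ ≤ min (α * σ₁) (α * β * σ₂)) :
    Jstar α β Smax k N E₁ E₂ (σ₁ - Δ / α) σ₂ ≤
      Jstar α β Smax k N E₁ E₂ σ₁ (σ₂ - Δ / (α * β)) := by
  obtain ⟨hα0, hα1⟩ := hα
  obtain ⟨hβ0, hβ1⟩ := hβ
  have hαβ : (0:ℝ) < α * β := mul_pos hα0 hβ0
  have hα' : α ≠ 0 := ne_of_gt hα0
  have hβ' : β ≠ 0 := ne_of_gt hβ0
  have hΔ1 : Δ ≤ α * σ₁ := le_trans hΔle (min_le_left _ _)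
  have hΔ2 : Δ ≤ α * β * σ₂ := le_trans hΔle (min_le_right _ _)
  have hΔαβ : Δ / (α * β) ≤ σ₂ := by
    rw [div_le_iff₀ hαβ]; linarith
  have hΔαβ0 : 0 ≤ Δ / (α * β) := div_nonneg hΔ (le_of_lt hαβ)
  apply csInf_le_csInf
  · -- bounded below by 0
    refine ⟨0, ?_⟩
    rintro r ⟨w₁, w₂, c₁, c₂, d₁, d₂, x₁₂, x₂₁, s₁, s₂, ⟨_, _, h3, _⟩, rfl⟩
    apply Finset.sum_nonneg
    intro t ht
    have h := h3 t ht
    linarith [h.1, h.2.1]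
  · -- the (σ₁, σ₂ - Δ/(αβ)) feasible set is nonempty
    refine ⟨∑ t ∈ Finset.Icc k N, (max 0 (-E₁ t) + max 0 (-E₂ t)),
      fun t => max 0 (-E₁ t), fun t => max 0 (-E₂ t),
      0, 0, 0, 0, 0, 0, fun _ => σ₁, fun _ => σ₂ - Δ / (α * β), ?_, rfl⟩
    refine ⟨rfl, rfl, ?_, ?_⟩
    · intro t ht
      refine ⟨le_max_left _ _, le_max_left _ _, le_refl _, le_refl _, le_refl _,
        le_refl _, le_refl _, le_refl _, by simp, by simp, by simpa using hσ₁.1,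
        by simpa using (by linarith : (0:ℝ) ≤ σ₂ - Δ / (α * β)), ?_, ?_⟩
      · have := le_max_right 0 (-E₁ t); simp only [Pi.zero_apply]; nlinarith
      · have := le_max_right 0 (-E₂ t); simp only [Pi.zero_apply]; nlinarith
    · intro t ht
      exact ⟨hσ₁.1, hσ₁.2, by linarith, by linarith [hσ₂.2]⟩
  · -- main inclusion: every cost achievable from (σ₁, σ₂ - Δ/(αβ)) is achievable
    -- from (σ₁ - Δ/α, σ₂)
    rintro r ⟨w₁, w₂, c₁, c₂, d₁, d₂, x₁₂, x₂₁, s₁, s₂, ⟨hs1k, hs2k, h3, h4⟩, rfl⟩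
    obtain ⟨D, hDk, hDsucc⟩ : ∃ D : ℕ → ℝ, D k = Δ / α ∧ ∀ t, k ≤ t →
        D (t + 1) = min (D t - max 0 (d₁ t - (s₁ t - D t)))
          (β * (Smax - s₂ (t + 1))) := by
      refine ⟨fun t => Dfun α β Smax Δ k d₁ s₁ s₂ (t - k), by simp [Dfun], ?_⟩
      intro t ht
      have h1 : t + 1 - k = (t - k) + 1 := by omega
      have h2 : k + (t - k) = t := by omega
      simp only [h1, Dfun, h2]
    set dl : ℕ → ℝ := fun t => max 0 (d₁ t - (s₁ t - D t)) with hdl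
    set X : ℕ → ℝ := fun t => max 0 (D t - dl t - β * (Smax - s₂ (t + 1))) with hXdef
    have hDsucc' : ∀ t, k ≤ t →
        D (t + 1) = min (D t - dl t) (β * (Smax - s₂ (t + 1))) := hDsucc
    have hDX : ∀ t, k ≤ t → D (t + 1) = D t - dl t - X t := by
      intro t ht
      rw [hDsucc' t ht, min_eq_sub_max]
    -- invariant
    have hinv : ∀ t, k ≤ t → t ≤ N + 1 →
        0 ≤ D t ∧ D t ≤ s₁ t ∧ s₂ t + D t / β ≤ Smax := by
      intro t ht
      induction t, ht using Nat.le_induction with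
      | base =>
        intro _
        refine ⟨by rw [hDk]; positivity, ?_, ?_⟩
        · rw [hDk, hs1k, div_le_iff₀ hα0]; linarith
        · rw [hDk, hs2k]
          have : Δ / α / β = Δ / (α * β) := by field_simp
          rw [this]; linarith [hσ₂.2]
      | succ t ht ih =>
        intro htN1
        have htN : t ≤ N := by omega
        obtain ⟨hD0, hDs₁, hDs₂⟩ := ih (by omega)
        have htIcc : t ∈ Finset.Icc k N := Finset.mem_Icc.mpr ⟨ht, htN⟩
        obtain ⟨hw₁, hw₂, hc₁, hc₂, hd₁, hd₂, hx₁₂, hx₂₁, hS₁, hS₂, hd₁s, hd₂s,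
          hb₁, hb₂⟩ := h3 t htIcc
        have ht1Icc : t + 1 ∈ Finset.Icc k (N + 1) := Finset.mem_Icc.mpr ⟨by omega, by omega⟩
        obtain ⟨_, _, _, hs₂le⟩ := h4 (t + 1) ht1Icc
        have hdl0 : 0 ≤ dl t := le_max_left _ _
        have hdlD : dl t ≤ D t := max_le hD0 (by linarith)
        have hcap : 0 ≤ β * (Smax - s₂ (t + 1)) := mul_nonneg hβ0.le (by linarith)
        rw [hDsucc' t ht]
        refine ⟨le_min (by linarith) hcap, ?_, ?_⟩
        · have h1 : min (D t - dl t) (β * (Smax - s₂ (t + 1))) ≤ D t - dl t :=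
            min_le_left _ _
          have h2 : d₁ t - (s₁ t - D t) ≤ dl t := le_max_right _ _
          have h3' : 0 ≤ α * c₁ t := by positivity
          rw [hS₁]; linarith
        · have h1 : min (D t - dl t) (β * (Smax - s₂ (t + 1))) ≤
              β * (Smax - s₂ (t + 1)) := min_le_right _ _
          have h2 : min (D t - dl t) (β * (Smax - s₂ (t + 1))) / β ≤
              β * (Smax - s₂ (t + 1)) / β := (div_le_div_iff_of_pos_right hβ0).mpr h1
          have h3 : β * (Smax - s₂ (t + 1)) / β = Smax - s₂ (t + 1) := by
            field_simp
          linarith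
    -- construct the new policy
    refine ⟨w₁, w₂, fun t => c₁ t + X t / α, fun t => c₂ t - X t / (α * β),
      fun t => d₁ t - dl t, fun t => d₂ t + dl t / β, x₁₂,
      fun t => x₂₁ t + α * dl t / β + X t / (α * β),
      fun t => s₁ t - D t, fun t => s₂ t + D t / β, ⟨?_, ?_, ?_, ?_⟩, rfl⟩
    · simp only; rw [hs1k, hDk]
    · simp only; rw [hs2k, hDk]
      field_simp
      ring
    · intro t ht
      dsimp only
      obtain ⟨htk, htN⟩ := Finset.mem_Icc.mp ht
      obtain ⟨hw₁, hw₂, hc₁, hc₂, hd₁, hd₂, hx₁₂, hx₂₁, hS₁, hS₂, hd₁s, hd₂s,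
        hb₁, hb₂⟩ := h3 t ht
      obtain ⟨hD0, hDs₁, hDs₂⟩ := hinv t htk (by omega)
      have ht1Icc : t + 1 ∈ Finset.Icc k (N + 1) := Finset.mem_Icc.mpr ⟨by omega, by omega⟩
      obtain ⟨_, _, _, hs₂le⟩ := h4 (t + 1) ht1Icc
      have hdl0 : 0 ≤ dl t := le_max_left _ _
      have hdlD : dl t ≤ D t := max_le hD0 (by linarith)
      have hdld₁ : dl t ≤ d₁ t := max_le hd₁ (by linarith)
      have hdlge : d₁ t - (s₁ t - D t) ≤ dl t := le_max_right _ _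
      have hX0 : 0 ≤ X t := le_max_left _ _
      have hcap : 0 ≤ β * (Smax - s₂ (t + 1)) := mul_nonneg hβ0.le (by linarith)
      have hXle : X t ≤ D t - dl t := max_le (by linarith) (by linarith)
      have hDcap : D t ≤ β * (Smax - s₂ t) := by
        have h : D t / β ≤ Smax - s₂ t := by linarith
        rw [div_le_iff₀ hβ0] at h
        linarith [h, mul_comm β (Smax - s₂ t)]
      have hXc₂ : X t ≤ α * β * c₂ t := by
        apply max_le (mul_nonneg (mul_nonneg hα0.le hβ0.le) hc₂)
        have e : β * (Smax - s₂ (t + 1)) = β * (Smax - s₂ t) - α * β * c₂ t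
            + β * d₂ t := by rw [hS₂]; ring
        have h1 : 0 ≤ β * d₂ t := mul_nonneg hβ0.le hd₂
        linarith [hDcap, hdl0, e, h1]
      have hXα : 0 ≤ X t / α := div_nonneg hX0 hα0.le
      have hdlβ : 0 ≤ dl t / β := div_nonneg hdl0 hβ0.le
      have hXαβ : 0 ≤ X t / (α * β) := div_nonneg hX0 hαβ.le
      have hαdlβ : 0 ≤ α * dl t / β := div_nonneg (mul_nonneg hα0.le hdl0) hβ0.le
      refine ⟨hw₁, hw₂, by linarith, ?_, by linarith, by linarith, hx₁₂,
        by linarith, ?_, ?_, by linarith, ?_, ?_, ?_⟩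
      · have h2 : X t / (α * β) ≤ c₂ t := by
          rw [div_le_iff₀ hαβ]
          linarith [hXc₂, mul_comm (α * β) (c₂ t)]
        linarith
      · -- storage 1 dynamics
        rw [hS₁, hDX t htk]
        field_simp
        ring
      · -- storage 2 dynamics
        rw [hS₂, hDX t htk]
        field_simp
        ring
      · -- d₂' ≤ s₂'
        have : dl t / β ≤ D t / β := by gcongr
        linarith
      · -- balance at node 1
        have e1 : E₁ t + w₁ t - (c₁ t + X t / α) + α * (d₁ t - dl t) - x₁₂ t
            + β * (x₂₁ t + α * dl t / β + X t / (α * β))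
            = E₁ t + w₁ t - c₁ t + α * d₁ t - x₁₂ t + β * x₂₁ t := by
          field_simp
          ring
        linarith [e1, hb₁]
      · -- balance at node 2
        have e2 : E₂ t + w₂ t - (c₂ t - X t / (α * β)) + α * (d₂ t + dl t / β)
            - (x₂₁ t + α * dl t / β + X t / (α * β)) + β * x₁₂ t
            = E₂ t + w₂ t - c₂ t + α * d₂ t - x₂₁ t + β * x₁₂ t := by
          field_simp
          ring
        linarith [e2, hb₂]
    · intro t ht
      dsimp only
      obtain ⟨htk, htN1⟩ := Finset.mem_Icc.mp ht
      obtain ⟨hs₁0, hs₁le, hs₂0, hs₂le⟩ := h4 t ht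
      obtain ⟨hD0, hDs₁, hDs₂⟩ := hinv t htk htN1
      have : 0 ≤ D t / β := div_nonneg hD0 hβ0.le
      exact ⟨by linarith, by linarith, by linarith, by linarith⟩
end

section
/- (Energy transfer is always optimal when β > α.) Suppose 0 < α < β ≤ 1 and E₁(k) > 0 > E₂(k). Let Δ = min{−E₂(k)/β, E₁(k)}, and define modified profiles E₁', E₂' by E₁'(k) = E₁(k) − Δ, E₂'(k) = E₂(k) + β·Δ, and E_i'(t) = E_i(t) for all t ∈ {k+1,…,N}. Then for every initial state (σ₁,σ₂) ∈ [0,S_max]², the optimal cost for the modified profiles is at most the optimal cost for the original profiles: J*_k(σ₁,σ₂; E₁', E₂') ≤ J*_k(σ₁,σ₂; E₁, E₂). (That is, transferring Δ units of energy from BS 1 to BS 2 at time k, of which β·Δ arrives, can be assumed to be part of an optimal policy.) -/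
namespace ETAux

set_option maxHeartbeats 1000000

/-- Context: the original policy data. -/
structure Ctx where
  α : ℝ
  β : ℝ
  Smax : ℝ
  c₁ : ℕ → ℝ
  c₂ : ℕ → ℝ
  d₁ : ℕ → ℝ
  d₂ : ℕ → ℝ
  s₁ : ℕ → ℝ
  s₂ : ℕ → ℝ

variable (C : Ctx)

noncomputable def rT (t : ℕ) (S₁ : ℝ) : ℝ := max 0 (C.d₁ t - S₁)

noncomputable def uT (t : ℕ) (S₁ S₂ : ℝ) : ℝ := min (S₂ - C.s₂ t) (rT C t S₁ / C.β)

noncomputable def mT (t : ℕ) (S₁ S₂ : ℝ) : ℝ :=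
  C.α * rT C t S₁ - C.α * C.β * uT C t S₁ S₂

noncomputable def XT (t : ℕ) (S₁ S₂ : ℝ) : ℝ :=
  max 0 (S₂ + C.α * C.c₂ t - C.d₂ t - uT C t S₁ S₂ - C.Smax)

noncomputable def qT (t : ℕ) (S₁ S₂ : ℝ) : ℝ := XT C t S₁ S₂ / C.α

noncomputable def hT (t : ℕ) (S₁ S₂ : ℝ) : ℝ :=
  min (C.β * qT C t S₁ S₂) ((C.s₁ t - S₁ - rT C t S₁) / C.α)

noncomputable def step (t : ℕ) (S : ℝ × ℝ × ℝ) : ℝ × ℝ × ℝ :=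
  (S.1 + C.α * (C.c₁ t + hT C t S.1 S.2.1) - (C.d₁ t - rT C t S.1),
   S.2.1 + C.α * (C.c₂ t - qT C t S.1 S.2.1) - (C.d₂ t + uT C t S.1 S.2.1),
   S.2.2 - mT C t S.1 S.2.1)

noncomputable def G (k : ℕ) (init : ℝ × ℝ × ℝ) : ℕ → ℝ × ℝ × ℝ
  | 0 => init
  | (n+1) => step C (k+1+n) (G k init n)

/-- invariant of the repaired state at time `t`. -/
def Inv (t : ℕ) (S : ℝ × ℝ × ℝ) : Prop :=
  0 ≤ S.1 ∧ S.1 ≤ C.s₁ t ∧ C.s₂ t ≤ S.2.1 ∧ S.2.1 ≤ C.Smax ∧ 0 ≤ S.2.2 ∧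
  C.α * (C.s₁ t - S.1) ≤ C.α * C.β * (S.2.1 - C.s₂ t) + S.2.2

/-- Core arithmetic of one repair step, with every quantity an explicit real. -/
theorem step_core (α β Smax E₁t E₂t w₁t w₂t c₁t c₂t d₁t d₂t x₁₂t x₂₁t
    s₁t s₂t s₁t1 s₂t1 S₁ S₂ Bb r u m X q h : ℝ)
    (hα : 0 < α) (hβ : 0 < β)
    (hr : r = max 0 (d₁t - S₁))
    (hu : u = min (S₂ - s₂t) (r / β))
    (hm : m = α * r - α * β * u)
    (hX : X = max 0 (S₂ + α * c₂t - d₂t - u - Smax))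
    (hq : q = X / α)
    (hh : h = min (β * q) ((s₁t - S₁ - r) / α))
    (hw₁ : 0 ≤ w₁t) (hw₂ : 0 ≤ w₂t) (hc₁ : 0 ≤ c₁t) (hc₂ : 0 ≤ c₂t)
    (hd₁ : 0 ≤ d₁t) (hd₂ : 0 ≤ d₂t) (hx₁₂ : 0 ≤ x₁₂t) (hx₂₁ : 0 ≤ x₂₁t)
    (hs₁rec : s₁t1 = s₁t + α * c₁t - d₁t)
    (hs₂rec : s₂t1 = s₂t + α * c₂t - d₂t)
    (hds₁ : d₁t ≤ s₁t) (hds₂ : d₂t ≤ s₂t)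
    (hA : 0 ≤ E₁t + w₁t - c₁t + α * d₁t - x₁₂t + β * x₂₁t)
    (hB : 0 ≤ E₂t + w₂t - c₂t + α * d₂t - x₂₁t + β * x₁₂t)
    (hbnd1 : s₂t1 ≤ Smax)
    (hS₁0 : 0 ≤ S₁) (hS₁s : S₁ ≤ s₁t) (hs₂S : s₂t ≤ S₂) (hS₂M : S₂ ≤ Smax)
    (hB0 : 0 ≤ Bb) (hI3 : α * (s₁t - S₁) ≤ α * β * (S₂ - s₂t) + Bb) :
    (0 ≤ m) ∧
    (0 ≤ c₁t + h) ∧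
    (0 ≤ c₂t - q) ∧
    (0 ≤ d₁t - r) ∧ (d₁t - r ≤ S₁) ∧
    (0 ≤ d₂t + u) ∧ (d₂t + u ≤ S₂) ∧
    (0 ≤ u) ∧ (0 ≤ q) ∧
    (0 ≤ E₁t + (w₁t + m) - (c₁t + h) + α * (d₁t - r) - x₁₂t
        + β * (x₂₁t + α * u + q)) ∧
    (0 ≤ E₂t + w₂t - (c₂t - q) + α * (d₂t + u) - (x₂₁t + α * u + q) + β * x₁₂t) ∧
    (0 ≤ S₁ + α * (c₁t + h) - (d₁t - r)) ∧
    (S₁ + α * (c₁t + h) - (d₁t - r) ≤ s₁t1) ∧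
    (s₂t1 ≤ S₂ + α * (c₂t - q) - (d₂t + u)) ∧
    (S₂ + α * (c₂t - q) - (d₂t + u) ≤ Smax) ∧
    (0 ≤ Bb - m) ∧
    (α * (s₁t1 - (S₁ + α * (c₁t + h) - (d₁t - r)))
      ≤ α * β * ((S₂ + α * (c₂t - q) - (d₂t + u)) - s₂t1) + (Bb - m)) := by
  have hr0 : 0 ≤ r := hr ▸ le_max_left _ _
  have hrd : d₁t - S₁ ≤ r := hr ▸ le_max_right _ _
  have hrδ : r ≤ s₁t - S₁ := by
    rcases max_cases 0 (d₁t - S₁) with ⟨h1, _⟩ | ⟨h1, _⟩ <;> rw [hr, h1] <;> linarith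
  have hrd₁ : r ≤ d₁t := by
    rcases max_cases 0 (d₁t - S₁) with ⟨h1, _⟩ | ⟨h1, _⟩ <;> rw [hr, h1] <;> linarith
  have hu0 : 0 ≤ u := hu ▸ le_min (by linarith) (div_nonneg hr0 hβ.le)
  have huδ : u ≤ S₂ - s₂t := hu ▸ min_le_left _ _
  have hβu : β * u ≤ r := by
    have h2 : u ≤ r / β := hu ▸ min_le_right _ _
    have := (le_div_iff₀ hβ).mp h2
    linarith
  have hucase : u = S₂ - s₂t ∨ β * u = r := by
    rcases min_cases (S₂ - s₂t) (r / β) with ⟨h1, _⟩ | ⟨h1, _⟩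
    · exact Or.inl (hu ▸ h1)
    · right; rw [hu, h1]; field_simp
  have hαβu : α * β * u ≤ α * r := by
    have := mul_le_mul_of_nonneg_left hβu hα.le
    nlinarith
  have hm0 : 0 ≤ m := by rw [hm]; linarith
  have hmB : m ≤ Bb := by
    rcases hucase with h1 | h1
    · have h3 : α * r ≤ α * (s₁t - S₁) := mul_le_mul_of_nonneg_left hrδ hα.le
      rw [hm, h1]; linarith
    · have h3 : α * β * u = α * r := by rw [← h1]; ring
      rw [hm]; linarith
  have hX0 : 0 ≤ X := hX ▸ le_max_left _ _
  have hXge : S₂ + α * c₂t - d₂t - u - Smax ≤ X := hX ▸ le_max_right _ _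
  have hαq : α * q = X := by rw [hq]; field_simp
  have hXc₂ : X ≤ α * c₂t := by
    have hac : 0 ≤ α * c₂t := mul_nonneg hα.le hc₂
    rcases max_cases 0 (S₂ + α * c₂t - d₂t - u - Smax) with ⟨h1, _⟩ | ⟨h1, _⟩ <;>
      rw [hX, h1] <;> linarith
  have hq0 : 0 ≤ q := hq ▸ div_nonneg hX0 hα.le
  have hqc₂ : q ≤ c₂t := le_of_mul_le_mul_left (by linarith) hα
  have hXδ : X ≤ (S₂ - s₂t) - u := by
    rw [hs₂rec] at hbnd1
    rcases max_cases 0 (S₂ + α * c₂t - d₂t - u - Smax) with ⟨h1, _⟩ | ⟨h1, _⟩ <;>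
      rw [hX, h1] <;> linarith
  have hh0 : 0 ≤ h := hh ▸ le_min (by positivity) (div_nonneg (by linarith) hα.le)
  have hhβq : h ≤ β * q := hh ▸ min_le_left _ _
  have hαh : α * h ≤ s₁t - S₁ - r := by
    have h2 : h ≤ (s₁t - S₁ - r) / α := hh ▸ min_le_right _ _
    have := (le_div_iff₀ hα).mp h2
    linarith
  have hhcase : h = β * q ∨ α * h = s₁t - S₁ - r := by
    rcases min_cases (β * q) ((s₁t - S₁ - r) / α) with ⟨h1, _⟩ | ⟨h1, _⟩
    · exact Or.inl (hh ▸ h1)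
    · right; rw [hh, h1]; field_simp
  refine ⟨hm0, by linarith, by linarith, by linarith, by linarith,
    by linarith, by linarith, hu0, hq0, ?_, ?_, ?_, ?_, ?_, ?_, by linarith, ?_⟩
  · have e1 : E₁t + (w₁t + m) - (c₁t + h) + α * (d₁t - r) - x₁₂t
        + β * (x₂₁t + α * u + q)
        = (E₁t + w₁t - c₁t + α * d₁t - x₁₂t + β * x₂₁t) + (β * q - h)
          + (m - (α * r - α * β * u)) := by ring
    have e2 : m - (α * r - α * β * u) = 0 := by rw [hm]; ring
    rw [e1, e2]; linarith
  · have e1 : E₂t + w₂t - (c₂t - q) + α * (d₂t + u) - (x₂₁t + α * u + q) + β * x₁₂t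
        = E₂t + w₂t - c₂t + α * d₂t - x₂₁t + β * x₁₂t := by ring
    rw [e1]; exact hB
  · have h3 : 0 ≤ α * (c₁t + h) := mul_nonneg hα.le (by linarith)
    linarith
  · rw [hs₁rec]
    have e1 : s₁t + α * c₁t - d₁t - (S₁ + α * (c₁t + h) - (d₁t - r))
        = (s₁t - S₁ - r) - α * h := by ring
    linarith [e1, hαh]
  · rw [hs₂rec]
    have e1 : S₂ + α * (c₂t - q) - (d₂t + u) - (s₂t + α * c₂t - d₂t)
        = (S₂ - s₂t) - α * q - u := by ring
    linarith [e1, hXδ, hαq]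
  · have e1 : S₂ + α * (c₂t - q) - (d₂t + u)
        = (S₂ + α * c₂t - d₂t - u - Smax) - α * q + Smax := by ring
    linarith [e1, hXge, hαq]
  · rw [hs₁rec, hs₂rec]
    rcases hhcase with h2 | h2
    · have e1 : α * (s₁t + α * c₁t - d₁t - (S₁ + α * (c₁t + h) - (d₁t - r)))
          - (α * β * (S₂ + α * (c₂t - q) - (d₂t + u) - (s₂t + α * c₂t - d₂t)) + (Bb - m))
          = α * (s₁t - S₁) - (α * β * (S₂ - s₂t) + Bb) := by
        rw [h2, hm]; ring
      linarith [e1, hI3]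
    · have e1 : α * (s₁t + α * c₁t - d₁t - (S₁ + α * (c₁t + h) - (d₁t - r)))
          = α * ((s₁t - S₁ - r) - α * h) := by ring
      have e2 : α * ((s₁t - S₁ - r) - α * h) = 0 := by
        have : (s₁t - S₁ - r) - α * h = 0 := by linarith
        rw [this, mul_zero]
      have h3 : 0 ≤ α * β * (S₂ + α * (c₂t - q) - (d₂t + u) - (s₂t + α * c₂t - d₂t)) := by
        have e3 : S₂ + α * (c₂t - q) - (d₂t + u) - (s₂t + α * c₂t - d₂t)
            = (S₂ - s₂t) - α * q - u := by ring
        have : 0 ≤ (S₂ - s₂t) - α * q - u := by linarith [hXδ, hαq]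
        rw [e3]; positivity
      linarith [e1, e2, h3]


theorem base_core (α β Smax Δ E₁k E₂k w₁k w₂k c₁k c₂k d₁k d₂k x₁₂k x₂₁k
    s₁k s₂k s₁k1 s₂k1 a D f b0 e Xk qk hk : ℝ)
    (hα : 0 < α) (hαβ : α < β) (hβ1 : β ≤ 1)
    (hΔ0 : 0 ≤ Δ) (hΔ2 : β * Δ ≤ -E₂k) (hΔ3 : Δ ≤ E₁k)
    (ha : a = min Δ x₁₂k)
    (hD : D = Δ - a)
    (hf : f = min d₂k (β * D / α))
    (hb : b0 = β * D - α * f)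
    (he : e = min c₁k D)
    (hXk : Xk = max 0 (s₂k + α * c₂k - (d₂k - f) - Smax))
    (hqk : qk = Xk / α)
    (hhk : hk = min (β * qk) e)
    (hw₁ : 0 ≤ w₁k) (hw₂ : 0 ≤ w₂k) (hc₁ : 0 ≤ c₁k) (hc₂ : 0 ≤ c₂k)
    (hd₁ : 0 ≤ d₁k) (hd₂ : 0 ≤ d₂k) (hx₁₂ : 0 ≤ x₁₂k) (hx₂₁ : 0 ≤ x₂₁k)
    (hs₁rec : s₁k1 = s₁k + α * c₁k - d₁k)
    (hs₂rec : s₂k1 = s₂k + α * c₂k - d₂k)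
    (hds₁ : d₁k ≤ s₁k) (hds₂ : d₂k ≤ s₂k)
    (hA : 0 ≤ E₁k + w₁k - c₁k + α * d₁k - x₁₂k + β * x₂₁k)
    (hB : 0 ≤ E₂k + w₂k - c₂k + α * d₂k - x₂₁k + β * x₁₂k)
    (hs₂kM : s₂k ≤ Smax) (hbnd1 : s₂k1 ≤ Smax) :
    (0 ≤ w₂k - b0) ∧
    (0 ≤ c₁k - e + hk) ∧
    (0 ≤ c₂k - qk) ∧
    (0 ≤ d₂k - f) ∧ (d₂k - f ≤ s₂k) ∧
    (0 ≤ x₁₂k - a) ∧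
    (0 ≤ qk) ∧
    (0 ≤ (E₁k - Δ) + w₁k - (c₁k - e + hk) + α * d₁k - (x₁₂k - a) + β * (x₂₁k + qk)) ∧
    (0 ≤ (E₂k + β * Δ) + (w₂k - b0) - (c₂k - qk) + α * (d₂k - f)
        - (x₂₁k + qk) + β * (x₁₂k - a)) ∧
    (0 ≤ s₁k + α * (c₁k - e + hk) - d₁k) ∧
    (s₁k + α * (c₁k - e + hk) - d₁k ≤ s₁k1) ∧
    (s₂k1 ≤ s₂k + α * (c₂k - qk) - (d₂k - f)) ∧
    (s₂k + α * (c₂k - qk) - (d₂k - f) ≤ Smax) ∧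
    (0 ≤ b0) ∧
    (α * (s₁k1 - (s₁k + α * (c₁k - e + hk) - d₁k))
      ≤ α * β * ((s₂k + α * (c₂k - qk) - (d₂k - f)) - s₂k1) + b0) := by
  have hβ : 0 < β := lt_trans hα hαβ
  have ha0 : 0 ≤ a := ha ▸ le_min hΔ0 hx₁₂
  have haΔ : a ≤ Δ := ha ▸ min_le_left _ _
  have hax : a ≤ x₁₂k := ha ▸ min_le_right _ _
  have hD0 : 0 ≤ D := by rw [hD]; linarith
  have hDx : D = 0 ∨ a = x₁₂k := by
    rcases min_cases Δ x₁₂k with ⟨h1, _⟩ | ⟨h1, _⟩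
    · left; rw [hD, ha, h1]; ring
    · right; rw [ha, h1]
  have hf0 : 0 ≤ f := hf ▸ le_min hd₂ (by positivity)
  have hfd : f ≤ d₂k := hf ▸ min_le_left _ _
  have hαf : α * f ≤ β * D := by
    have h2 : f ≤ β * D / α := hf ▸ min_le_right _ _
    have := (le_div_iff₀ hα).mp h2
    linarith
  have hb00 : 0 ≤ b0 := by rw [hb]; linarith
  have hfcase : f = d₂k ∨ α * f = β * D := by
    rcases min_cases d₂k (β * D / α) with ⟨h1, _⟩ | ⟨h1, _⟩
    · exact Or.inl (hf ▸ h1)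
    · right; rw [hf, h1]; field_simp
  have hbw : b0 ≤ w₂k := by
    rcases hfcase with h1 | h1
    · rcases hDx with h2 | h2
      · have e1 : b0 = -(α * d₂k) := by rw [hb, h1, h2]; ring
        have : 0 ≤ α * d₂k := mul_nonneg hα.le hd₂
        linarith
      · have e1 : b0 = β * Δ - β * x₁₂k - α * d₂k := by rw [hb, h1, hD, h2]; ring
        linarith
    · have e1 : b0 = 0 := by rw [hb]; linarith
      linarith
  have he0 : 0 ≤ e := he ▸ le_min hc₁ hD0
  have hec : e ≤ c₁k := he ▸ min_le_left _ _
  have heD : e ≤ D := he ▸ min_le_right _ _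
  have hXk0 : 0 ≤ Xk := hXk ▸ le_max_left _ _
  have hXkge : s₂k + α * c₂k - (d₂k - f) - Smax ≤ Xk := hXk ▸ le_max_right _ _
  have hαqk : α * qk = Xk := by rw [hqk]; field_simp
  have hXkc₂ : Xk ≤ α * c₂k := by
    have hac : 0 ≤ α * c₂k := mul_nonneg hα.le hc₂
    rcases max_cases 0 (s₂k + α * c₂k - (d₂k - f) - Smax) with ⟨h1, _⟩ | ⟨h1, _⟩ <;>
      rw [hXk, h1] <;> linarith
  have hqk0 : 0 ≤ qk := hqk ▸ div_nonneg hXk0 hα.le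
  have hqkc₂ : qk ≤ c₂k := le_of_mul_le_mul_left (by linarith) hα
  have hXkδ : Xk ≤ f := by
    rw [hs₂rec] at hbnd1
    rcases max_cases 0 (s₂k + α * c₂k - (d₂k - f) - Smax) with ⟨h1, _⟩ | ⟨h1, _⟩ <;>
      rw [hXk, h1] <;> linarith
  have hhk0 : 0 ≤ hk := hhk ▸ le_min (by positivity) he0
  have hhke : hk ≤ e := hhk ▸ min_le_right _ _
  have hhkβq : hk ≤ β * qk := hhk ▸ min_le_left _ _
  have hhkcase : hk = β * qk ∨ hk = e := by
    rcases min_cases (β * qk) e with ⟨h1, _⟩ | ⟨h1, _⟩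
    · exact Or.inl (hhk ▸ h1)
    · exact Or.inr (hhk ▸ h1)
  refine ⟨by linarith, by linarith, by linarith, by linarith, by linarith,
    by linarith, hqk0, ?_, ?_, ?_, ?_, ?_, ?_, hb00, ?_⟩
  · -- power 1
    have e1 : (E₁k - Δ) + w₁k - (c₁k - e + hk) + α * d₁k - (x₁₂k - a) + β * (x₂₁k + qk)
        = (E₁k + w₁k - c₁k + α * d₁k - x₁₂k + β * x₂₁k) + (a + e - Δ) + (β * qk - hk) := by
      ring
    rw [e1]
    have key : Δ ≤ a + e + (E₁k + w₁k - c₁k + α * d₁k - x₁₂k + β * x₂₁k) := by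
      rcases min_cases c₁k D with ⟨h1, _⟩ | ⟨h1, _⟩
      · -- e = c₁k
        rcases hDx with h2 | h2
        · -- D = 0, so Δ = a
          have : Δ = a := by rw [hD] at h2; linarith
          rw [he, h1]; linarith
        · -- a = x₁₂k : use Δ ≤ E₁k
          have h3 : 0 ≤ α * d₁k := mul_nonneg hα.le hd₁
          have h4 : 0 ≤ β * x₂₁k := mul_nonneg hβ.le hx₂₁
          rw [he, h1, h2]; linarith
      · -- e = D
        have : e = D := he ▸ h1
        rw [this, hD]; linarith
    linarith
  · -- power 2 : equals original B
    have e1 : (E₂k + β * Δ) + (w₂k - b0) - (c₂k - qk) + α * (d₂k - f)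
        - (x₂₁k + qk) + β * (x₁₂k - a)
        = (E₂k + w₂k - c₂k + α * d₂k - x₂₁k + β * x₁₂k) := by
      rw [hb, hD]; ring
    rw [e1]; exact hB
  · have h3 : 0 ≤ α * (c₁k - e + hk) := mul_nonneg hα.le (by linarith)
    linarith
  · rw [hs₁rec]
    have e1 : s₁k + α * c₁k - d₁k - (s₁k + α * (c₁k - e + hk) - d₁k) = α * (e - hk) := by
      ring
    have h3 : 0 ≤ α * (e - hk) := mul_nonneg hα.le (by linarith)
    linarith
  · rw [hs₂rec]
    have e1 : s₂k + α * (c₂k - qk) - (d₂k - f) - (s₂k + α * c₂k - d₂k)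
        = f - α * qk := by ring
    linarith [e1, hXkδ, hαqk]
  · have e1 : s₂k + α * (c₂k - qk) - (d₂k - f)
      = (s₂k + α * c₂k - (d₂k - f) - Smax) - α * qk + Smax := by ring
    linarith [e1, hXkge, hαqk]
  · -- budget invariant at k+1
    rw [hs₁rec, hs₂rec]
    have eL : α * (s₁k + α * c₁k - d₁k - (s₁k + α * (c₁k - e + hk) - d₁k))
        = α * (α * (e - hk)) := by ring
    rcases hhkcase with h2 | h2
    · -- hk = β * qk
      have eR : α * β * ((s₂k + α * (c₂k - qk) - (d₂k - f)) - (s₂k + α * c₂k - d₂k)) + b0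
          = α * β * f - α * β * (α * qk) + b0 := by ring
      have h1' : (1 - β) * (α * f) ≤ (1 - β) * (β * D) :=
        mul_le_mul_of_nonneg_left hαf (by linarith)
      have h2' : α * (α * e) ≤ α * (α * D) :=
        mul_le_mul_of_nonneg_left (mul_le_mul_of_nonneg_left heD hα.le) hα.le
      have h3' : α * (α * D) ≤ β * (β * D) := by
        have hx : 0 ≤ (β - α) * ((β + α) * D) :=
          mul_nonneg (by linarith) (mul_nonneg (by linarith) hD0)
        have ex : β * (β * D) - α * (α * D) = (β - α) * ((β + α) * D) := by ring
        linarith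
      have goal' : α * (α * e) ≤ α * β * f + b0 := by
        rw [hb]
        have eq1 : α * β * f = β * (α * f) := by ring
        linarith [h1', h2', h3', eq1]
      rw [eL, eR, h2]
      have efin : (α * β * f - α * β * (α * qk) + b0) - α * (α * (e - β * qk))
          = (α * β * f + b0) - α * (α * e) := by ring
      linarith [goal', efin]
    · -- hk = e : debt zero
      have eL0 : α * (α * (e - hk)) = 0 := by rw [h2]; ring
      have h3 : 0 ≤ α * β * ((s₂k + α * (c₂k - qk) - (d₂k - f)) - (s₂k + α * c₂k - d₂k)) := by
        have e1 : (s₂k + α * (c₂k - qk) - (d₂k - f)) - (s₂k + α * c₂k - d₂k)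
            = f - α * qk := by ring
        have : 0 ≤ f - α * qk := by linarith [hXkδ, hαqk]
        rw [e1]; positivity
      linarith [eL, eL0, h3]

theorem key (α β Smax : ℝ) (k N : ℕ) (E₁ E₂ : ℕ → ℝ) (σ₁ σ₂ : ℝ)
    (w₁ w₂ c₁ c₂ d₁ d₂ x₁₂ x₂₁ s₁ s₂ : ℕ → ℝ)
    (hα : 0 < α) (hαβ : α < β) (hβ1 : β ≤ 1) (hkN : k ≤ N)
    (Δ : ℝ) (hΔ0 : 0 ≤ Δ) (hΔ2 : β * Δ ≤ -(E₂ k)) (hΔ3 : Δ ≤ E₁ k)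
    (hF : Feasible α β Smax k N E₁ E₂ σ₁ σ₂ w₁ w₂ c₁ c₂ d₁ d₂ x₁₂ x₂₁ s₁ s₂) :
    ∃ w₁' w₂' c₁' c₂' d₁' d₂' x₁₂' x₂₁' s₁' s₂' : ℕ → ℝ,
      Feasible α β Smax k N (fun t => if t = k then E₁ k - Δ else E₁ t)
        (fun t => if t = k then E₂ k + β * Δ else E₂ t) σ₁ σ₂
        w₁' w₂' c₁' c₂' d₁' d₂' x₁₂' x₂₁' s₁' s₂' ∧
      (∑ t ∈ Finset.Icc k N, (w₁' t + w₂' t)) ≤ ∑ t ∈ Finset.Icc k N, (w₁ t + w₂ t) := by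
  have hβ : 0 < β := lt_trans hα hαβ
  obtain ⟨hs₁k, hs₂k, hctrl, hstate⟩ := hF
  set C : Ctx := ⟨α, β, Smax, c₁, c₂, d₁, d₂, s₁, s₂⟩ with hC
  -- slot-k constants
  set a : ℝ := min Δ (x₁₂ k) with ha
  set D : ℝ := Δ - a with hD
  set f : ℝ := min (d₂ k) (β * D / α) with hf
  set b0 : ℝ := β * D - α * f with hb
  set e : ℝ := min (c₁ k) D with he
  set Xk : ℝ := max 0 (s₂ k + α * c₂ k - (d₂ k - f) - Smax) with hXk
  set qk : ℝ := Xk / α with hqk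
  set hk : ℝ := min (β * qk) e with hhk
  set init : ℝ × ℝ × ℝ :=
    (s₁ k + α * (c₁ k - e + hk) - d₁ k, s₂ k + α * (c₂ k - qk) - (d₂ k - f), b0) with hinit
  -- original constraints at slot k
  obtain ⟨hw₁k, hw₂k, hc₁k, hc₂k, hd₁k, hd₂k, hx₁₂k, hx₂₁k, hs₁reck, hs₂reck,
    hds₁k, hds₂k, hAk, hBk⟩ := hctrl k (Finset.mem_Icc.mpr ⟨le_refl k, hkN⟩)
  obtain ⟨hs₁k0, hs₁kM, hs₂k0, hs₂kM⟩ := hstate k (Finset.mem_Icc.mpr ⟨le_refl k, by omega⟩)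
  obtain ⟨hs₁k10, hs₁k1M, hs₂k10, hs₂k1M⟩ :=
    hstate (k+1) (Finset.mem_Icc.mpr ⟨by omega, by omega⟩)
  have hbase := base_core α β Smax Δ (E₁ k) (E₂ k) (w₁ k) (w₂ k) (c₁ k) (c₂ k)
    (d₁ k) (d₂ k) (x₁₂ k) (x₂₁ k) (s₁ k) (s₂ k) (s₁ (k+1)) (s₂ (k+1))
    a D f b0 e Xk qk hk hα hαβ hβ1 hΔ0 hΔ2 hΔ3 ha hD hf hb he hXk hqk hhk
    hw₁k hw₂k hc₁k hc₂k hd₁k hd₂k hx₁₂k hx₂₁k hs₁reck hs₂reck hds₁k hds₂k hAk hBk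
    hs₂kM hs₂k1M
  obtain ⟨B1, B2, B3, B4, B5, B6, B7, B8, B9, B10, B11, B12, B13, B14, B15⟩ := hbase
  -- the invariant propagates
  have hInv : ∀ n, k + 1 + n ≤ N + 1 → Inv C (k+1+n) (G C k init n) := by
    intro n
    induction n with
    | zero =>
      intro _
      show Inv C (k+1) init
      refine ⟨B10, ?_, ?_, B13, B14, ?_⟩
      · show init.1 ≤ s₁ (k+1+0)
        exact B11
      · show s₂ (k+1+0) ≤ init.2.1
        simpa using B12
      · show α * (s₁ (k+1+0) - init.1) ≤ α * β * (init.2.1 - s₂ (k+1+0)) + init.2.2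
        simpa using B15
    | succ n ih =>
      intro hle
      have hle' : k + 1 + n ≤ N := by omega
      have hInvn := ih (by omega)
      obtain ⟨hw₁t, hw₂t, hc₁t, hc₂t, hd₁t, hd₂t, hx₁₂t, hx₂₁t, hs₁rect, hs₂rect,
        hds₁t, hds₂t, hAt, hBt⟩ := hctrl (k+1+n) (Finset.mem_Icc.mpr ⟨by omega, hle'⟩)
      obtain ⟨_, _, _, hs₂M'⟩ :=
        hstate (k+1+n+1) (Finset.mem_Icc.mpr ⟨by omega, by omega⟩)
      obtain ⟨hI1, hI2, hI3, hI4, hI5, hI6⟩ := hInvn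
      have hstep := step_core α β Smax (E₁ (k+1+n)) (E₂ (k+1+n)) (w₁ (k+1+n)) (w₂ (k+1+n))
        (c₁ (k+1+n)) (c₂ (k+1+n)) (d₁ (k+1+n)) (d₂ (k+1+n)) (x₁₂ (k+1+n)) (x₂₁ (k+1+n))
        (s₁ (k+1+n)) (s₂ (k+1+n)) (s₁ (k+1+n+1)) (s₂ (k+1+n+1))
        (G C k init n).1 (G C k init n).2.1 (G C k init n).2.2
        (rT C (k+1+n) (G C k init n).1) (uT C (k+1+n) (G C k init n).1 (G C k init n).2.1)
        (mT C (k+1+n) (G C k init n).1 (G C k init n).2.1)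
        (XT C (k+1+n) (G C k init n).1 (G C k init n).2.1)
        (qT C (k+1+n) (G C k init n).1 (G C k init n).2.1)
        (hT C (k+1+n) (G C k init n).1 (G C k init n).2.1)
        hα hβ rfl rfl rfl rfl rfl rfl
        hw₁t hw₂t hc₁t hc₂t hd₁t hd₂t hx₁₂t hx₂₁t hs₁rect hs₂rect hds₁t hds₂t hAt hBt
        hs₂M' hI1 hI2 hI3 hI4 hI5 hI6
      obtain ⟨_, _, _, _, _, _, _, _, _, _, _, S12, S13, S14, S15, S16, S17⟩ := hstep
      show Inv C (k+1+(n+1)) (step C (k+1+n) (G C k init n))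
      have harith : k+1+(n+1) = k+1+n+1 := by omega
      rw [harith]
      exact ⟨S12, S13, S14, S15, S16, S17⟩
  have hGs : ∀ n, G C k init (n+1) = step C (k+1+n) (G C k init n) := fun n => rfl
  -- the repaired policy
  refine ⟨(fun t => if t ≤ k then w₁ t
      else w₁ t + mT C t (G C k init (t-(k+1))).1 (G C k init (t-(k+1))).2.1),
    (fun t => if t = k then w₂ t - b0 else w₂ t),
    (fun t => if t = k then c₁ t - e + hk else if t ≤ k then c₁ t
      else c₁ t + hT C t (G C k init (t-(k+1))).1 (G C k init (t-(k+1))).2.1),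
    (fun t => if t = k then c₂ t - qk else if t ≤ k then c₂ t
      else c₂ t - qT C t (G C k init (t-(k+1))).1 (G C k init (t-(k+1))).2.1),
    (fun t => if t ≤ k then d₁ t else d₁ t - rT C t (G C k init (t-(k+1))).1),
    (fun t => if t = k then d₂ t - f else if t ≤ k then d₂ t
      else d₂ t + uT C t (G C k init (t-(k+1))).1 (G C k init (t-(k+1))).2.1),
    (fun t => if t = k then x₁₂ t - a else x₁₂ t),
    (fun t => if t = k then x₂₁ t + qk else if t ≤ k then x₂₁ t
      else x₂₁ t + α * uT C t (G C k init (t-(k+1))).1 (G C k init (t-(k+1))).2.1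
        + qT C t (G C k init (t-(k+1))).1 (G C k init (t-(k+1))).2.1),
    (fun t => if t ≤ k then s₁ t else (G C k init (t-(k+1))).1),
    (fun t => if t ≤ k then s₂ t else (G C k init (t-(k+1))).2.1),
    ⟨by simpa using hs₁k, by simpa using hs₂k, ?_, ?_⟩, ?_⟩
  · -- per-slot constraints
    intro t ht
    rw [Finset.mem_Icc] at ht
    rcases Nat.eq_or_lt_of_le ht.1 with heq | hlt
    · -- t = k
      subst heq
      have h1 : ¬ (k + 1 ≤ k) := by omega
      simp only [eq_self_iff_true, le_refl, ite_true, if_neg h1, Nat.sub_self]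
      exact ⟨hw₁k, B1, B2, B3, hd₁k, B4, B6, by linarith [hx₂₁k, B7], rfl, rfl,
        hds₁k, B5, B8, B9⟩
    · -- t = k + 1 + n
      obtain ⟨n, rfl⟩ : ∃ n, t = k + 1 + n := ⟨t - (k+1), by omega⟩
      have hne1 : ¬ (k + 1 + n ≤ k) := by omega
      have hne2 : ¬ (k + 1 + n = k) := by omega
      have hne3 : ¬ (k + 1 + n + 1 ≤ k) := by omega
      have hidx : k + 1 + n - (k+1) = n := by omega
      have hidx1 : k + 1 + n + 1 - (k+1) = n + 1 := by omega
      have hInvn := hInv n (by omega)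
      obtain ⟨hI1, hI2, hI3, hI4, hI5, hI6⟩ := hInvn
      obtain ⟨hw₁t, hw₂t, hc₁t, hc₂t, hd₁t, hd₂t, hx₁₂t, hx₂₁t, hs₁rect, hs₂rect,
        hds₁t, hds₂t, hAt, hBt⟩ := hctrl (k+1+n) (Finset.mem_Icc.mpr ⟨by omega, ht.2⟩)
      obtain ⟨_, _, _, hs₂M'⟩ :=
        hstate (k+1+n+1) (Finset.mem_Icc.mpr ⟨by omega, by omega⟩)
      have hstep := step_core α β Smax (E₁ (k+1+n)) (E₂ (k+1+n)) (w₁ (k+1+n)) (w₂ (k+1+n))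
        (c₁ (k+1+n)) (c₂ (k+1+n)) (d₁ (k+1+n)) (d₂ (k+1+n)) (x₁₂ (k+1+n)) (x₂₁ (k+1+n))
        (s₁ (k+1+n)) (s₂ (k+1+n)) (s₁ (k+1+n+1)) (s₂ (k+1+n+1))
        (G C k init n).1 (G C k init n).2.1 (G C k init n).2.2
        (rT C (k+1+n) (G C k init n).1) (uT C (k+1+n) (G C k init n).1 (G C k init n).2.1)
        (mT C (k+1+n) (G C k init n).1 (G C k init n).2.1)
        (XT C (k+1+n) (G C k init n).1 (G C k init n).2.1)
        (qT C (k+1+n) (G C k init n).1 (G C k init n).2.1)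
        (hT C (k+1+n) (G C k init n).1 (G C k init n).2.1)
        hα hβ rfl rfl rfl rfl rfl rfl
        hw₁t hw₂t hc₁t hc₂t hd₁t hd₂t hx₁₂t hx₂₁t hs₁rect hs₂rect hds₁t hds₂t hAt hBt
        hs₂M' hI1 hI2 hI3 hI4 hI5 hI6
      obtain ⟨S1, S2, S3, S4, S5, S6, S7, S8, S9, S10, S11, S12, S13, S14, S15, S16, S17⟩ :=
        hstep
      have hu0' : 0 ≤ α * uT C (k+1+n) (G C k init n).1 (G C k init n).2.1 :=
        mul_nonneg hα.le S8
      simp only [if_neg hne1, if_neg hne2, if_neg hne3, hidx, hidx1, hGs n]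
      exact ⟨by linarith [hw₁t, S1], hw₂t, S2, S3, S4, S6, hx₁₂t,
        by linarith [hx₂₁t, hu0', S9], rfl, rfl, S5, S7, S10, S11⟩
  · -- state bounds
    intro t ht
    rw [Finset.mem_Icc] at ht
    rcases Nat.eq_or_lt_of_le ht.1 with heq | hlt
    · subst heq
      simp only [le_refl, ite_true]
      exact ⟨hs₁k0, hs₁kM, hs₂k0, hs₂kM⟩
    · obtain ⟨n, rfl⟩ : ∃ n, t = k + 1 + n := ⟨t - (k+1), by omega⟩
      have hne1 : ¬ (k + 1 + n ≤ k) := by omega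
      have hidx : k + 1 + n - (k+1) = n := by omega
      obtain ⟨hI1, hI2, hI3, hI4, _, _⟩ := hInv n (by omega)
      obtain ⟨hb1, hb2, hb3, hb4⟩ := hstate (k+1+n) (Finset.mem_Icc.mpr ⟨by omega, ht.2⟩)
      simp only [if_neg hne1, hidx]
      exact ⟨hI1, le_trans hI2 hb2, le_trans hb3 hI3, hI4⟩
  · -- cost comparison
    have hsplit : ∀ (g : ℕ → ℝ), ∑ t ∈ Finset.Icc k N, g t
        = g k + ∑ i ∈ Finset.range (N - k), g (k+1+i) := by
      intro g
      rw [Finset.Icc_eq_cons_Ioc hkN, Finset.sum_cons]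
      congr 1
      rw [← Finset.Icc_add_one_left_eq_Ioc, ← Finset.Ico_add_one_right_eq_Icc (k+1) N,
        Finset.sum_Ico_eq_sum_range]
      have harg : N + 1 - (k + 1) = N - k := by omega
      rw [harg]
    rw [hsplit, hsplit]
    have hBend : 0 ≤ (G C k init (N - k)).2.2 := (hInv (N-k) (by omega)).2.2.2.2.1
    have hsum2 : ∑ i ∈ Finset.range (N - k),
        ((fun t => if t ≤ k then w₁ t
            else w₁ t + mT C t (G C k init (t-(k+1))).1 (G C k init (t-(k+1))).2.1) (k+1+i)
          + (fun t => if t = k then w₂ t - b0 else w₂ t) (k+1+i))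
        = (∑ i ∈ Finset.range (N - k), (w₁ (k+1+i) + w₂ (k+1+i)))
          + (b0 - (G C k init (N - k)).2.2) := by
      have hterm : ∀ i ∈ Finset.range (N - k),
          ((fun t => if t ≤ k then w₁ t
              else w₁ t + mT C t (G C k init (t-(k+1))).1 (G C k init (t-(k+1))).2.1) (k+1+i)
            + (fun t => if t = k then w₂ t - b0 else w₂ t) (k+1+i))
          = (w₁ (k+1+i) + w₂ (k+1+i))
            + ((G C k init i).2.2 - (G C k init (i+1)).2.2) := by
        intro i _
        have hne1 : ¬ (k + 1 + i ≤ k) := by omega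
        have hne2 : ¬ (k + 1 + i = k) := by omega
        have hidx : k + 1 + i - (k+1) = i := by omega
        simp only [if_neg hne1, if_neg hne2, hidx]
        have : (G C k init (i+1)).2.2
            = (G C k init i).2.2 - mT C (k+1+i) (G C k init i).1 (G C k init i).2.1 := by
          rw [hGs i]; rfl
        rw [this]; ring
      rw [Finset.sum_congr rfl hterm, Finset.sum_add_distrib,
        Finset.sum_range_sub' (fun i => (G C k init i).2.2) (N - k)]
      have h0 : (G C k init 0).2.2 = b0 := rfl
      rw [h0]
    rw [hsum2]
    have hwk : ((fun t => if t ≤ k then w₁ t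
        else w₁ t + mT C t (G C k init (t-(k+1))).1 (G C k init (t-(k+1))).2.1) k
        + (fun t => if t = k then w₂ t - b0 else w₂ t) k)
        = w₁ k + w₂ k - b0 := by
      simp only [eq_self_iff_true, le_refl, ite_true]; ring
    rw [hwk]
    linarith [hBend]

theorem cost_set_nonempty (α β Smax : ℝ) (k N : ℕ) (E₁ E₂ : ℕ → ℝ) (σ₁ σ₂ : ℝ)
    (hσ₁ : 0 ≤ σ₁ ∧ σ₁ ≤ Smax) (hσ₂ : 0 ≤ σ₂ ∧ σ₂ ≤ Smax) :
    {r : ℝ | ∃ w₁ w₂ c₁ c₂ d₁ d₂ x₁₂ x₂₁ s₁ s₂ : ℕ → ℝ,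
      Feasible α β Smax k N E₁ E₂ σ₁ σ₂ w₁ w₂ c₁ c₂ d₁ d₂ x₁₂ x₂₁ s₁ s₂ ∧
      (∑ t ∈ Finset.Icc k N, (w₁ t + w₂ t)) = r}.Nonempty := by
  refine ⟨_, (fun t => max 0 (-(E₁ t))), (fun t => max 0 (-(E₂ t))),
    0, 0, 0, 0, 0, 0, (fun _ => σ₁), (fun _ => σ₂), ⟨rfl, rfl, ?_, ?_⟩, rfl⟩
  · intro t _
    refine ⟨le_max_left _ _, le_max_left _ _, le_refl _, le_refl _, le_refl _, le_refl _,
      le_refl _, le_refl _, by simp, by simp, hσ₁.1, hσ₂.1, ?_, ?_⟩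
    · have := le_max_right 0 (-(E₁ t)); simp only [Pi.zero_apply]; nlinarith [le_max_left 0 (-(E₁ t))]
    · have := le_max_right 0 (-(E₂ t)); simp only [Pi.zero_apply]; nlinarith [le_max_left 0 (-(E₂ t))]
  · intro t _
    exact ⟨hσ₁.1, hσ₁.2, hσ₂.1, hσ₂.2⟩

theorem cost_set_bddBelow (α β Smax : ℝ) (k N : ℕ) (E₁ E₂ : ℕ → ℝ) (σ₁ σ₂ : ℝ) :
    BddBelow {r : ℝ | ∃ w₁ w₂ c₁ c₂ d₁ d₂ x₁₂ x₂₁ s₁ s₂ : ℕ → ℝ,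
      Feasible α β Smax k N E₁ E₂ σ₁ σ₂ w₁ w₂ c₁ c₂ d₁ d₂ x₁₂ x₂₁ s₁ s₂ ∧
      (∑ t ∈ Finset.Icc k N, (w₁ t + w₂ t)) = r} := by
  refine ⟨0, fun r hr => ?_⟩
  obtain ⟨w₁, w₂, c₁, c₂, d₁, d₂, x₁₂, x₂₁, s₁, s₂, hF, hsum⟩ := hr
  rw [← hsum]
  apply Finset.sum_nonneg
  intro t ht
  obtain ⟨h1, h2, _⟩ := hF.2.2.1 t ht
  linarith


end ETAux

set_option maxHeartbeats 1000000 in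
/-- Proposition 4: energy transfer is always optimal when `β > α`. -/
theorem energy_transfer_optimal
    (α β Smax : ℝ) (hα : 0 < α) (hαβ : α < β) (hβ : β ≤ 1) (hS : 0 < Smax)
    (k N : ℕ) (hkN : k ≤ N) (E₁ E₂ : ℕ → ℝ)
    (hEk : E₁ k > 0 ∧ 0 > E₂ k)
    (Δ : ℝ) (hΔ : Δ = min (-(E₂ k) / β) (E₁ k))
    (E₁' E₂' : ℕ → ℝ)
    (hE₁' : E₁' = fun t => if t = k then E₁ k - Δ else E₁ t)
    (hE₂' : E₂' = fun t => if t = k then E₂ k + β * Δ else E₂ t)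
    (σ₁ σ₂ : ℝ) (hσ₁ : 0 ≤ σ₁ ∧ σ₁ ≤ Smax) (hσ₂ : 0 ≤ σ₂ ∧ σ₂ ≤ Smax) :
    Jstar α β Smax k N E₁' E₂' σ₁ σ₂ ≤ Jstar α β Smax k N E₁ E₂ σ₁ σ₂ := by
  obtain ⟨hE₁k, hE₂k⟩ := hEk
  have hβ0 : 0 < β := lt_trans hα hαβ
  have hΔ0 : 0 ≤ Δ := by
    rw [hΔ]
    exact le_min (le_of_lt (div_pos (by linarith) hβ0)) hE₁k.le
  have hΔ2 : β * Δ ≤ -(E₂ k) := by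
    have h1 : Δ ≤ -(E₂ k) / β := hΔ ▸ min_le_left _ _
    have := (le_div_iff₀ hβ0).mp h1
    linarith
  have hΔ3 : Δ ≤ E₁ k := hΔ ▸ min_le_right _ _
  unfold Jstar
  apply le_csInf (ETAux.cost_set_nonempty α β Smax k N E₁ E₂ σ₁ σ₂ hσ₁ hσ₂)
  intro r hr
  obtain ⟨w₁, w₂, c₁, c₂, d₁, d₂, x₁₂, x₂₁, s₁, s₂, hF, hsum⟩ := hr
  obtain ⟨w₁', w₂', c₁', c₂', d₁', d₂', x₁₂', x₂₁', s₁', s₂', hF', hle⟩ :=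
    ETAux.key α β Smax k N E₁ E₂ σ₁ σ₂ w₁ w₂ c₁ c₂ d₁ d₂ x₁₂ x₂₁ s₁ s₂
      hα hαβ hβ hkN Δ hΔ0 hΔ2 hΔ3 hF
  rw [hE₁', hE₂']
  refine le_trans (csInf_le (ETAux.cost_set_bddBelow α β Smax k N _ _ σ₁ σ₂)
    ⟨w₁', w₂', c₁', c₂', d₁', d₂', x₁₂', x₂₁', s₁', s₂', hF', rfl⟩) ?_
  rw [← hsum]
  exact hle
end
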